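/- arXiv:1303.4243 — 5 statements merged into one kernel-verified Lean document; each statement's English description precedes it below -/
import Mathlib

section
/- Let N, d ≥ 1, let X = Fin N × Fin d, and let ι : FreeLieAlgebra ℝ X → FreeAlgebra ℝ X be the unique Lie algebra morphism into the free associative algebra equipped with the commutator bracket ⁅u,v⁆ = u·v − v·u which sends each generator of the free Lie algebra to the corresponding generator of the free algebra. Then the set 𝔨 := {a ∈ FreeLieAlgebra ℝ X : coeff_w(ι(a)) = 0 for every block word w} is a Lie ideal of FreeLieAlgebra ℝ X: it is a linear subspace and ⁅a, b⁆ ∈ 𝔨 whenever a ∈ 𝔨 and b ∈ FreeLieAlgebra ℝ X. -/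
/-- The coefficient of the word `w` in an element of the free algebra, with respect to the
basis of `FreeAlgebra ℝ X` indexed by `FreeMonoid X`. -/
noncomputable def FreeAlgebra.coeffWord {X : Type} (a : FreeAlgebra ℝ X) (w : FreeMonoid X) : ℝ :=
  (FreeAlgebra.basisFreeMonoid ℝ X).repr a w

/-- A word is a block word if it is nonempty and all of its letters have the same
block index (first component). -/
def IsBlockWord {N d : ℕ} (w : FreeMonoid (Fin N × Fin d)) : Prop :=
  w ≠ 1 ∧ ∃ m : Fin N, ∀ l ∈ FreeMonoid.toList w, l.1 = m

attribute [local instance 100] LieRing.ofAssociativeRing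

namespace BWAux

variable {X : Type}

noncomputable def eX (X : Type) : FreeAlgebra ℝ X ≃ₐ[ℝ] MonoidAlgebra ℝ (FreeMonoid X) :=
  FreeAlgebra.equivMonoidAlgebraFreeMonoid

lemma coeffWord_eq (a : FreeAlgebra ℝ X) (w : FreeMonoid X) :
    FreeAlgebra.coeffWord a w = (eX X a).coeff w := by
  simp [FreeAlgebra.coeffWord, FreeAlgebra.basisFreeMonoid, eX]

lemma basis_apply (w : FreeMonoid X) :
    (FreeAlgebra.basisFreeMonoid ℝ X) w = (eX X).symm (MonoidAlgebra.single w 1) := by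
  simp [FreeAlgebra.basisFreeMonoid, Module.Basis.map_apply, eX]

lemma symm_single_of (x : X) :
    (eX X).symm (MonoidAlgebra.single (FreeMonoid.of x) (1:ℝ)) = FreeAlgebra.ι ℝ x := by
  apply (eX X).injective
  simp [eX, FreeAlgebra.equivMonoidAlgebraFreeMonoid]

lemma algebraMapInv_basis_one :
    FreeAlgebra.algebraMapInv ((FreeAlgebra.basisFreeMonoid ℝ X) 1) = 1 := by
  rw [basis_apply, ← MonoidAlgebra.one_def]
  simp

lemma algebraMapInv_basis_ne (w : FreeMonoid X) (hw : w ≠ 1) :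
    FreeAlgebra.algebraMapInv ((FreeAlgebra.basisFreeMonoid ℝ X) w) = 0 := by
  rw [basis_apply]
  induction w using FreeMonoid.recOn with
  | one => exact absurd rfl hw
  | of_mul x y _ =>
    have h1 : (MonoidAlgebra.single (FreeMonoid.of x * y) (1:ℝ))
        = MonoidAlgebra.single (FreeMonoid.of x) 1 * MonoidAlgebra.single y 1 := by
      rw [MonoidAlgebra.single_mul_single, one_mul]
    rw [h1, map_mul, symm_single_of, map_mul]
    simp [FreeAlgebra.algebraMapInv]

lemma coeffWord_one_eq (a : FreeAlgebra ℝ X) :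
    FreeAlgebra.coeffWord a 1 = FreeAlgebra.algebraMapInv a := by
  have key : (Finsupp.lapply (1 : FreeMonoid X)).comp
        (FreeAlgebra.basisFreeMonoid ℝ X).repr.toLinearMap
      = (FreeAlgebra.algebraMapInv (R := ℝ) (X := X)).toLinearMap := by
    apply Module.Basis.ext (FreeAlgebra.basisFreeMonoid ℝ X)
    intro w
    by_cases h : w = 1
    · subst h
      simp [algebraMapInv_basis_one, Module.Basis.repr_self]
    · simp only [LinearMap.comp_apply, LinearEquiv.coe_toLinearMap, Module.Basis.repr_self,
        Finsupp.lapply_apply, AlgHom.toLinearMap_apply, algebraMapInv_basis_ne w h,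
        ]
      classical
      rw [Finsupp.single_apply]
      simp [h]
  exact congrFun (congrArg (fun f => f.toFun) key) a

lemma algebraMapInv_iota {X : Type} (ι : FreeLieAlgebra ℝ X →ₗ⁅ℝ⁆ FreeAlgebra ℝ X)
    (hι : ∀ x, ι (FreeLieAlgebra.of ℝ x) = FreeAlgebra.ι ℝ x) (a : FreeLieAlgebra ℝ X) :
    FreeAlgebra.algebraMapInv (ι a) = 0 := by
  let Z : FreeLieAlgebra ℝ X →ₗ⁅ℝ⁆ ℝ := { toLinearMap := (0 : _ →ₗ[ℝ] ℝ), map_lie' := by simp }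
  have key : ((FreeAlgebra.algebraMapInv (R := ℝ) (X := X)).toLieHom.comp ι) = Z := by
    apply FreeLieAlgebra.hom_ext
    intro x
    show FreeAlgebra.algebraMapInv (ι (FreeLieAlgebra.of ℝ x)) = (0 : _ →ₗ[ℝ] ℝ) _
    simp [hι, FreeAlgebra.algebraMapInv]
  have := DFunLike.congr_fun key a
  exact this

lemma mul_apply_zero (f g : MonoidAlgebra ℝ (FreeMonoid X)) (w : FreeMonoid X)
    (P : X → Prop) (hf : ∀ u : FreeMonoid X, (∀ l ∈ FreeMonoid.toList u, P l) → f.coeff u = 0)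
    (hw : ∀ l ∈ FreeMonoid.toList w, P l) : (f * g).coeff w = 0 ∧ (g * f).coeff w = 0 := by
  classical
  constructor
  · rw [MonoidAlgebra.mul_apply]
    apply Finset.sum_eq_zero
    intro a₁ _
    apply Finset.sum_eq_zero
    intro a₂ _
    dsimp only
    split_ifs with h
    · rw [hf a₁ (fun l hl => hw l (by
        rw [← h, FreeMonoid.toList_mul]; exact List.mem_append_left _ hl)), zero_mul]
    · rfl
  · rw [MonoidAlgebra.mul_apply]
    apply Finset.sum_eq_zero
    intro a₁ _
    apply Finset.sum_eq_zero
    intro a₂ _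
    dsimp only
    split_ifs with h
    · rw [hf a₂ (fun l hl => hw l (by
        rw [← h, FreeMonoid.toList_mul]; exact List.mem_append_right _ hl)), mul_zero]
    · rfl

lemma coeffWord_add (a b : FreeAlgebra ℝ X) (w : FreeMonoid X) :
    (a + b).coeffWord w = a.coeffWord w + b.coeffWord w := by
  simp [FreeAlgebra.coeffWord]

lemma coeffWord_smul (c : ℝ) (a : FreeAlgebra ℝ X) (w : FreeMonoid X) :
    (c • a).coeffWord w = c * a.coeffWord w := by
  simp [FreeAlgebra.coeffWord]

end BWAux

open BWAux in
theorem blockWord_vanishing_is_lie_ideal (N d : ℕ) (hN : 1 ≤ N) (hd : 1 ≤ d)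
    (ι : FreeLieAlgebra ℝ (Fin N × Fin d) →ₗ⁅ℝ⁆ FreeAlgebra ℝ (Fin N × Fin d))
    (hι : ∀ x : Fin N × Fin d, ι (FreeLieAlgebra.of ℝ x) = FreeAlgebra.ι ℝ x) :
    ∃ I : LieIdeal ℝ (FreeLieAlgebra ℝ (Fin N × Fin d)),
      ∀ a : FreeLieAlgebra ℝ (Fin N × Fin d),
        a ∈ I ↔ ∀ w : FreeMonoid (Fin N × Fin d), IsBlockWord w →
          FreeAlgebra.coeffWord (ι a) w = 0 := by
  refine ⟨{ carrier := {a | ∀ w, IsBlockWord w → FreeAlgebra.coeffWord (ι a) w = 0}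
          , add_mem' := ?_, zero_mem' := ?_, smul_mem' := ?_, lie_mem := ?_}, fun a => Iff.rfl⟩
  · intro a b ha hb w hw
    have h1 : ι (a + b) = ι a + ι b := ι.map_add a b
    rw [h1, coeffWord_add, ha w hw, hb w hw, add_zero]
  · intro w hw
    simp [FreeAlgebra.coeffWord]
  · intro c a ha w hw
    have h1 : ι (c • a) = c • ι a := ι.map_smul c a
    rw [h1, coeffWord_smul, ha w hw, mul_zero]
  · intro x a ha w hw
    obtain ⟨hne, m, hm⟩ := hw
    have hfa : ∀ u : FreeMonoid (Fin N × Fin d),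
        (∀ l ∈ FreeMonoid.toList u, l.1 = m) → (eX _ (ι a)).coeff u = 0 := by
      intro u hu
      rw [← coeffWord_eq]
      by_cases h1 : u = 1
      · rw [h1, coeffWord_one_eq, algebraMapInv_iota ι hι]
      · exact ha u ⟨h1, m, hu⟩
    rw [coeffWord_eq]
    have hlie : ι ⁅x, a⁆ = ι x * ι a - ι a * ι x := by
      rw [LieHom.map_lie, Ring.lie_def]
    rw [hlie, map_sub, map_mul, map_mul, MonoidAlgebra.coeff_sub, Finsupp.sub_apply,
      (mul_apply_zero (eX _ (ι a)) (eX _ (ι x)) w _ hfa hm).2,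
      (mul_apply_zero (eX _ (ι a)) (eX _ (ι x)) w _ hfa hm).1, sub_zero]
end

section
/- Let N, d ≥ 1 and X = Fin N × Fin d, and let K := {a ∈ FreeAlgebra ℝ X : coeff_∅(a) = 0 and coeff_w(a) = 0 for every block word w}. If a ∈ K and b ∈ FreeAlgebra ℝ X satisfies coeff_∅(b) = 0, then the commutator a·b − b·a belongs to K, i.e. its empty-word coefficient vanishes and its coefficient on every block word vanishes. -/
lemma coeffWord_eq {X : Type} (a : FreeAlgebra ℝ X) (w : FreeMonoid X) :
    FreeAlgebra.coeffWord a w = (FreeAlgebra.equivMonoidAlgebraFreeMonoid (R := ℝ) (X := X) a).coeff w := by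
  simp only [FreeAlgebra.coeffWord, FreeAlgebra.basisFreeMonoid, Module.Basis.map_repr,
    LinearEquiv.symm_symm, LinearEquiv.trans_apply, Finsupp.basisSingleOne_repr,
    LinearEquiv.refl_apply]
  rfl

lemma coeffWord_sub {X : Type} (a b : FreeAlgebra ℝ X) (w : FreeMonoid X) :
    FreeAlgebra.coeffWord (a - b) w = FreeAlgebra.coeffWord a w - FreeAlgebra.coeffWord b w := by
  simp only [coeffWord_eq, map_sub]; rfl

lemma coeffWord_mul_eq_zero {X : Type} (a b : FreeAlgebra ℝ X) (w : FreeMonoid X)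
    (h : ∀ u v, u * v = w → FreeAlgebra.coeffWord a u * FreeAlgebra.coeffWord b v = 0) :
    FreeAlgebra.coeffWord (a * b) w = 0 := by
  classical
  rw [coeffWord_eq, map_mul, MonoidAlgebra.mul_apply, Finsupp.sum]
  refine Finset.sum_eq_zero fun u _ => ?_
  rw [Finsupp.sum]
  refine Finset.sum_eq_zero fun v _ => ?_
  split_ifs with huv
  · rw [← coeffWord_eq, ← coeffWord_eq]; exact h u v huv
  · rfl

lemma eq_one_of_mul_eq_one_left {X : Type} {u v : FreeMonoid X} (h : u * v = 1) : u = 1 := by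
  have := congrArg FreeMonoid.toList h
  rw [FreeMonoid.toList_mul, FreeMonoid.toList_one] at this
  rcases List.append_eq_nil_iff.mp this with ⟨h1, _⟩
  exact FreeMonoid.toList.injective (by simp [h1])

lemma block_factor_left {N d : ℕ} {w u v : FreeMonoid (Fin N × Fin d)} (h : u * v = w)
    (hw : IsBlockWord w) : u = 1 ∨ IsBlockWord u := by
  rcases eq_or_ne u 1 with h1 | h1
  · exact Or.inl h1
  · obtain ⟨m, hm⟩ := hw.2
    exact Or.inr ⟨h1, m, fun l hl => hm l (by
      rw [← h, FreeMonoid.toList_mul]; exact List.mem_append_left _ hl)⟩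

lemma block_factor_right {N d : ℕ} {w u v : FreeMonoid (Fin N × Fin d)} (h : u * v = w)
    (hw : IsBlockWord w) : v = 1 ∨ IsBlockWord v := by
  rcases eq_or_ne v 1 with h1 | h1
  · exact Or.inl h1
  · obtain ⟨m, hm⟩ := hw.2
    exact Or.inr ⟨h1, m, fun l hl => hm l (by
      rw [← h, FreeMonoid.toList_mul]; exact List.mem_append_right _ hl)⟩

theorem commutator_mem_blockWord_vanishing_set (N d : ℕ) (hN : 1 ≤ N) (hd : 1 ≤ d)
    (a b : FreeAlgebra ℝ (Fin N × Fin d))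
    (ha_empty : FreeAlgebra.coeffWord a 1 = 0)
    (ha_block : ∀ w : FreeMonoid (Fin N × Fin d), IsBlockWord w → FreeAlgebra.coeffWord a w = 0)
    (hb_empty : FreeAlgebra.coeffWord b 1 = 0) :
    FreeAlgebra.coeffWord (a * b - b * a) 1 = 0 ∧
      ∀ w : FreeMonoid (Fin N × Fin d), IsBlockWord w →
        FreeAlgebra.coeffWord (a * b - b * a) w = 0 := by
  constructor
  · rw [coeffWord_sub]
    have h1 : FreeAlgebra.coeffWord (a * b) 1 = 0 :=
      coeffWord_mul_eq_zero a b 1 fun u v huv => by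
        rw [eq_one_of_mul_eq_one_left huv, ha_empty, zero_mul]
    have h2 : FreeAlgebra.coeffWord (b * a) 1 = 0 :=
      coeffWord_mul_eq_zero b a 1 fun u v huv => by
        rw [eq_one_of_mul_eq_one_left huv, hb_empty, zero_mul]
    rw [h1, h2, sub_zero]
  · intro w hw
    rw [coeffWord_sub]
    have h1 : FreeAlgebra.coeffWord (a * b) w = 0 :=
      coeffWord_mul_eq_zero a b w fun u v huv => by
        rcases block_factor_left huv hw with h | h
        · rw [h, ha_empty, zero_mul]
        · rw [ha_block u h, zero_mul]
    have h2 : FreeAlgebra.coeffWord (b * a) w = 0 :=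
      coeffWord_mul_eq_zero b a w fun u v huv => by
        rcases block_factor_right huv hw with h | h
        · rw [h, ha_empty, mul_zero]
        · rw [ha_block v h, mul_zero]
    rw [h1, h2, sub_zero]
end

section
/- Let p ≥ 1 and α > 0, let (E,d) be a metric space and let x : [0,T] → E be a continuous path with ν_p(x; 0,T) < ∞; set ω_x(s,t) := ν_p(x; s,t). Then ω_x(0,T) ≤ 2^{p−1} · α · max{1, α^{−p} · M_{α,[0,T]}(ω_x)^p}, with the convention that the right-hand side is +∞ when M_{α,[0,T]}(ω_x) = ∞. -/
open scoped ENNReal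

/-- The `p`-variation functional of a path `x` on the interval `[s, t]`:
the supremum over all partitions `s = u₀ < u₁ < … < u_n = t` of
`∑ d(x_{u_{i-1}}, x_{u_i})^p`, valued in `[0, ∞]`. -/
noncomputable def pVar {E : Type*} [PseudoMetricSpace E] (p : ℝ) (x : ℝ → E) (s t : ℝ) : ℝ≥0∞ :=
  ⨆ (n : ℕ) (u : Fin (n + 1) → ℝ) (_ : StrictMono u) (_ : u 0 = s)
    (_ : u (Fin.last n) = t),
    ∑ i : Fin n, edist (x (u i.castSucc)) (x (u i.succ)) ^ p

/-- The accumulated `α`-local `ω`-variation on `[0, T]`: the supremum over all partitions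
`0 = t₀ < t₁ < … < t_n = T` with `ω (t_{i-1}, t_i) ≤ α` for every `i` of
`∑ ω (t_{i-1}, t_i)`. -/
noncomputable def accumLocalVar (ω : ℝ → ℝ → ℝ≥0∞) (α : ℝ≥0∞) (T : ℝ) : ℝ≥0∞ :=
  ⨆ (n : ℕ) (u : Fin (n + 1) → ℝ) (_ : StrictMono u) (_ : u 0 = 0)
    (_ : u (Fin.last n) = T) (_ : ∀ i : Fin n, ω (u i.castSucc) (u i.succ) ≤ α),
    ∑ i : Fin n, ω (u i.castSucc) (u i.succ)

open scoped Classical in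
/-- The greedy subdivision points: `σ₀ = 0` and
`σ_{i+1} = inf {t ∈ (σ_i, T] : ω (σ_i, t) ≥ α}`, with `σ_{i+1} = T` if no such `t` exists. -/
noncomputable def greedyPoints (ω : ℝ → ℝ → ℝ≥0∞) (α : ℝ≥0∞) (T : ℝ) : ℕ → ℝ
  | 0 => 0
  | n + 1 =>
    if ∃ t ∈ Set.Ioc (greedyPoints ω α T n) T, α ≤ ω (greedyPoints ω α T n) t then
      sInf {t | t ∈ Set.Ioc (greedyPoints ω α T n) T ∧ α ≤ ω (greedyPoints ω α T n) t}
    else T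

namespace PVarProof

variable {E : Type*} [PseudoMetricSpace E] (p : ℝ) (x : ℝ → E)

/-- Sum of `p`-th powers of distances along the first `n` steps of `u`. -/
noncomputable def psum (n : ℕ) (u : ℕ → ℝ) : ℝ≥0∞ :=
  ∑ i ∈ Finset.range n, edist (x (u i)) (x (u (i + 1))) ^ p

variable {p x}

lemma psum_le_pVar {s t : ℝ} {n : ℕ} {u : ℕ → ℝ} (hu : StrictMonoOn u (Set.Iic n))
    (h0 : u 0 = s) (hn : u n = t) : psum p x n u ≤ pVar p x s t := by
  have hv : StrictMono (fun i : Fin (n+1) => u i.val) := by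
    intro i j hij
    exact hu (Set.mem_Iic.2 (Nat.lt_succ_iff.1 i.isLt)) (Set.mem_Iic.2 (Nat.lt_succ_iff.1 j.isLt))
      (Fin.lt_iff_val_lt_val.1 hij)
  have hsum : (∑ i : Fin n, edist (x ((fun i : Fin (n+1) => u i.val) i.castSucc))
      (x ((fun i : Fin (n+1) => u i.val) i.succ)) ^ p) = psum p x n u := by
    rw [psum, ← Fin.sum_univ_eq_sum_range]
    rfl
  rw [pVar]
  refine le_iSup_of_le n (le_iSup_of_le (fun i : Fin (n+1) => u i.val) ?_)
  refine le_iSup_of_le hv (le_iSup_of_le h0 (le_iSup_of_le hn ?_))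
  exact hsum.ge

lemma pVar_le {s t : ℝ} {C : ℝ≥0∞}
    (h : ∀ (n : ℕ) (u : ℕ → ℝ), StrictMonoOn u (Set.Iic n) → u 0 = s → u n = t →
      psum p x n u ≤ C) : pVar p x s t ≤ C := by
  rw [pVar]
  refine iSup_le fun n => iSup_le fun v => iSup_le fun hv => iSup_le fun h0 => iSup_le fun hl => ?_
  set u : ℕ → ℝ := fun j => v ⟨min j n, Nat.lt_succ_of_le (min_le_right _ _)⟩ with hu
  have humono : StrictMonoOn u (Set.Iic n) := by
    intro a ha b hb hab
    apply hv
    simp only [Fin.lt_iff_val_lt_val]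
    simpa [Nat.min_eq_left (Set.mem_Iic.1 ha), Nat.min_eq_left (Set.mem_Iic.1 hb)] using hab
  have h0' : u 0 = s := by simpa [hu] using h0
  have hn' : u n = t := by
    have : (⟨min n n, Nat.lt_succ_of_le (min_le_right _ _)⟩ : Fin (n+1)) = Fin.last n := by
      simp [Fin.ext_iff]
    exact (congrArg v this).trans hl
  have hsum : (∑ i : Fin n, edist (x (v i.castSucc)) (x (v i.succ)) ^ p) = psum p x n u := by
    rw [psum, ← Fin.sum_univ_eq_sum_range]
    refine Finset.sum_congr rfl fun i _ => ?_
    congr 2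
    · congr 1
      apply congrArg
      simp [hu, Fin.ext_iff, Nat.min_eq_left (Nat.le_of_lt_succ i.castSucc.isLt)]
    · congr 1
      apply congrArg
      have : (i : ℕ) + 1 ≤ n := i.isLt
      simp [hu, Fin.ext_iff, Nat.min_eq_left this]
  rw [hsum]
  exact h n u humono h0' hn'


/-- The type of (ℕ-indexed) partitions of `[s,t]`. -/
def Ptn (s t : ℝ) : Type :=
  {q : ℕ × (ℕ → ℝ) // StrictMonoOn q.2 (Set.Iic q.1) ∧ q.2 0 = s ∧ q.2 q.1 = t}

lemma pVar_eq_iSup_psum (s t : ℝ) :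
    pVar p x s t = ⨆ q : Ptn s t, psum p x q.1.1 q.1.2 := by
  refine le_antisymm (pVar_le fun n u hu h0 hn => ?_) (iSup_le fun q => ?_)
  · exact le_iSup_of_le ⟨(n, u), hu, h0, hn⟩ le_rfl
  · exact psum_le_pVar q.2.1 q.2.2.1 q.2.2.2

theorem ptnNonempty {s t : ℝ} (h : s < t) : Nonempty (Ptn s t) := by
  refine ⟨⟨(1, fun j => if j = 0 then s else t), ?_, by simp, by simp⟩⟩
  intro a ha b hb hab
  have ha' : a = 0 ∨ a = 1 := by have := Set.mem_Iic.1 ha; omega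
  have hb' : b = 0 ∨ b = 1 := by have := Set.mem_Iic.1 hb; omega
  rcases ha' with rfl | rfl <;> rcases hb' with rfl | rfl <;> simp_all <;> omega

lemma pVar_self (s : ℝ) : pVar p x s s = 0 := by
  refine le_antisymm (pVar_le fun n u hu h0 hn => ?_) (zero_le)
  rcases Nat.eq_zero_or_pos n with rfl | hn0
  · simp [psum]
  · exact absurd (hu (Set.mem_Iic.2 (Nat.zero_le n)) Set.self_mem_Iic hn0)
      (by rw [h0, hn]; exact lt_irrefl s)

lemma exists_partition_of_lt_pVar {s t : ℝ} {C : ℝ≥0∞} (h : C < pVar p x s t) :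
    ∃ (n : ℕ) (u : ℕ → ℝ), StrictMonoOn u (Set.Iic n) ∧ u 0 = s ∧ u n = t ∧
      C < psum p x n u := by
  by_contra hc
  push_neg at hc
  exact absurd (pVar_le (C := C) fun n u hu h0 hn => hc n u hu h0 hn) (not_le.2 h)

/-- Superadditivity of `pVar`. -/
lemma pVar_superadd {s m t : ℝ} (hsm : s ≤ m) (hmt : m ≤ t) :
    pVar p x s m + pVar p x m t ≤ pVar p x s t := by
  rcases eq_or_lt_of_le hsm with rfl | hsm'
  · rw [pVar_self, zero_add]
  rcases eq_or_lt_of_le hmt with rfl | hmt'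
  · rw [pVar_self, add_zero]
  have := ptnNonempty hsm'
  have := ptnNonempty hmt'
  rw [pVar_eq_iSup_psum s m, pVar_eq_iSup_psum m t]
  refine ENNReal.iSup_add_iSup_le fun q₁ q₂ => ?_
  obtain ⟨⟨n₁, u₁⟩, hu₁mono, hu₁0, hu₁n⟩ := q₁
  obtain ⟨⟨n₂, u₂⟩, hu₂mono, hu₂0, hu₂n⟩ := q₂
  dsimp only at hu₁mono hu₁0 hu₁n hu₂mono hu₂0 hu₂n
  set w : ℕ → ℝ := fun j => if j ≤ n₁ then u₁ j else u₂ (j - n₁) with hw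
  have hw₁ : ∀ j ≤ n₁, w j = u₁ j := fun j hj => by simp [hw, hj]
  have hw₂ : ∀ k ≤ n₂, w (n₁ + k) = u₂ k := by
    intro k hk
    rcases Nat.eq_zero_or_pos k with rfl | hk0
    · simp [hw, hu₁n, hu₂0]
    · have : ¬ (n₁ + k ≤ n₁) := by omega
      simp [hw, this]
  have hwmono : StrictMonoOn w (Set.Iic (n₁ + n₂)) := by
    intro a ha b hb hab
    rcases le_or_gt b n₁ with hb1 | hb1
    · rw [hw₁ a (le_trans hab.le hb1), hw₁ b hb1]
      exact hu₁mono (Set.mem_Iic.2 (le_trans hab.le hb1)) (Set.mem_Iic.2 hb1) hab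
    · have hb' : b = n₁ + (b - n₁) := by omega
      have hbk : b - n₁ ≤ n₂ := by
        have := Set.mem_Iic.1 hb; omega
      rcases le_or_gt a n₁ with ha1 | ha1
      · rw [hw₁ a ha1, hb', hw₂ _ hbk]
        calc u₁ a ≤ u₁ n₁ := by
              rcases eq_or_lt_of_le ha1 with rfl | h
              · exact le_rfl
              · exact (hu₁mono (Set.mem_Iic.2 ha1) Set.self_mem_Iic h).le
          _ = u₂ 0 := by rw [hu₁n, hu₂0]
          _ < u₂ (b - n₁) := hu₂mono (Set.mem_Iic.2 (Nat.zero_le _)) (Set.mem_Iic.2 hbk)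
              (by omega)
      · have ha' : a = n₁ + (a - n₁) := by omega
        have hak : a - n₁ ≤ n₂ := by omega
        rw [ha', hb', hw₂ _ hak, hw₂ _ hbk]
        exact hu₂mono (Set.mem_Iic.2 hak) (Set.mem_Iic.2 hbk) (by omega)
  have hw0 : w 0 = s := by rw [hw₁ 0 (Nat.zero_le _), hu₁0]
  have hwn : w (n₁ + n₂) = t := by rw [hw₂ n₂ le_rfl, hu₂n]
  have hsplit : psum p x (n₁ + n₂) w = psum p x n₁ u₁ + psum p x n₂ u₂ := by
    rw [psum, Finset.sum_range_add]
    congr 1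
    · refine Finset.sum_congr rfl fun i hi => ?_
      have hi' := Finset.mem_range.1 hi
      rw [hw₁ i (by omega), hw₁ (i+1) (by omega)]
    · refine Finset.sum_congr rfl fun i hi => ?_
      have hi' := Finset.mem_range.1 hi
      rw [hw₂ i (by omega), show n₁ + i + 1 = n₁ + (i+1) by omega, hw₂ (i+1) (by omega)]
  rw [← hsplit]
  exact psum_le_pVar hwmono hw0 hwn

/-- Monotonicity of `pVar` under interval inclusion. -/
lemma pVar_mono {s a b t : ℝ} (hsa : s ≤ a) (hab : a ≤ b) (hbt : b ≤ t) :
    pVar p x a b ≤ pVar p x s t := by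
  calc pVar p x a b ≤ pVar p x s a + pVar p x a b := le_add_self
    _ ≤ pVar p x s b := pVar_superadd hsa hab
    _ ≤ (pVar p x s b) + pVar p x b t := le_self_add
    _ ≤ pVar p x s t := pVar_superadd (hsa.trans hab) hbt

/-- A single step is dominated by `pVar`. -/
lemma edist_rpow_le_pVar {c d : ℝ} (hp : 0 < p) (hcd : c ≤ d) :
    edist (x c) (x d) ^ p ≤ pVar p x c d := by
  rcases eq_or_lt_of_le hcd with rfl | h
  · simp [edist_self, ENNReal.zero_rpow_of_pos hp, pVar_self]
  · have : edist (x c) (x d) ^ p = psum p x 1 (fun j => if j = 0 then c else d) := by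
      simp [psum]
    rw [this]
    refine psum_le_pVar ?_ (by simp) (by simp)
    intro i hi j hj hij
    have hi' : i = 0 ∨ i = 1 := by have := Set.mem_Iic.1 hi; omega
    have hj' : j = 0 ∨ j = 1 := by have := Set.mem_Iic.1 hj; omega
    rcases hi' with rfl | rfl <;> rcases hj' with rfl | rfl <;> simp_all <;> omega

/-- Chain lemma: sums along weak chains in `[a,b]` are bounded by `pVar a b`. -/
lemma chain_le_pVar {a b : ℝ} {m : ℕ} {c : ℕ → ℝ} (hp : 0 < p)
    (hmono : ∀ j < m, c j ≤ c (j + 1)) (ha : a ≤ c 0) (hb : c m ≤ b) :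
    (∑ j ∈ Finset.range m, edist (x (c j)) (x (c (j + 1))) ^ p) ≤ pVar p x a b := by
  have hc : ∀ j ≤ m, c 0 ≤ c j := by
    intro j hj
    induction j with
    | zero => exact le_rfl
    | succ k ih => exact (ih (by omega)).trans (hmono k (by omega))
  have key : ∀ m' ≤ m, (∑ j ∈ Finset.range m', edist (x (c j)) (x (c (j + 1))) ^ p) ≤
      pVar p x (c 0) (c m') := by
    intro m' hm'
    induction m' with
    | zero => simp [pVar_self]
    | succ k ih =>
      rw [Finset.sum_range_succ]
      calc (∑ j ∈ Finset.range k, edist (x (c j)) (x (c (j + 1))) ^ p)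
            + edist (x (c k)) (x (c (k + 1))) ^ p
          ≤ pVar p x (c 0) (c k) + pVar p x (c k) (c (k + 1)) :=
            add_le_add (ih (by omega)) (edist_rpow_le_pVar hp (hmono k (by omega)))
        _ ≤ pVar p x (c 0) (c (k + 1)) := pVar_superadd (hc k (by omega)) (hmono k (by omega))
  exact (key m le_rfl).trans (pVar_mono ha (hc m le_rfl) hb)


/-- Power-mean inequality: `(∑ a)^p ≤ N^(p-1) * ∑ a^p`. -/
lemma rpow_sum_le_card_mul_sum {p : ℝ} (hp : 1 ≤ p) (N : ℕ) (hN : N ≠ 0) (a : ℕ → ℝ≥0∞) :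
    (∑ i ∈ Finset.range N, a i) ^ p ≤
      (N : ℝ≥0∞) ^ (p - 1) * ∑ i ∈ Finset.range N, a i ^ p := by
  have hN0 : (N : ℝ≥0∞) ≠ 0 := Nat.cast_ne_zero.2 hN
  have hNt : (N : ℝ≥0∞) ≠ ∞ := ENNReal.natCast_ne_top N
  have key := ENNReal.rpow_arith_mean_le_arith_mean_rpow (Finset.range N)
    (fun _ => (N : ℝ≥0∞)⁻¹) a (by
      rw [Finset.sum_const, Finset.card_range, nsmul_eq_mul, ENNReal.mul_inv_cancel hN0 hNt]) hp
  have hL : (∑ i ∈ Finset.range N, (N : ℝ≥0∞)⁻¹ * a i) =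
      (N : ℝ≥0∞)⁻¹ * ∑ i ∈ Finset.range N, a i := by rw [Finset.mul_sum]
  rw [hL, ENNReal.mul_rpow_of_nonneg _ _ (by linarith)] at key
  have hR : (∑ i ∈ Finset.range N, (N : ℝ≥0∞)⁻¹ * a i ^ p) =
      (N : ℝ≥0∞)⁻¹ * ∑ i ∈ Finset.range N, a i ^ p := by rw [Finset.mul_sum]
  rw [hR] at key
  have hinv : ((N : ℝ≥0∞)⁻¹ ^ p)⁻¹ = (N : ℝ≥0∞) ^ p := by
    rw [ENNReal.inv_rpow, inv_inv]
  have hpe : ((N : ℝ≥0∞)⁻¹ ^ p) ≠ 0 :=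
    (ENNReal.rpow_pos (ENNReal.inv_pos.2 hNt) (ENNReal.inv_ne_top.2 hN0)).ne'
  have hpt : ((N : ℝ≥0∞)⁻¹ ^ p) ≠ ∞ :=
    ENNReal.rpow_ne_top_of_nonneg (by linarith) (ENNReal.inv_ne_top.2 hN0)
  calc (∑ i ∈ Finset.range N, a i) ^ p
      = ((N : ℝ≥0∞)⁻¹ ^ p)⁻¹ * (((N : ℝ≥0∞)⁻¹ ^ p) * (∑ i ∈ Finset.range N, a i) ^ p) := by
        rw [← mul_assoc, ENNReal.inv_mul_cancel hpe hpt, one_mul]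
    _ ≤ ((N : ℝ≥0∞)⁻¹ ^ p)⁻¹ * ((N : ℝ≥0∞)⁻¹ * ∑ i ∈ Finset.range N, a i ^ p) :=
        mul_le_mul_right key _
    _ = (N : ℝ≥0∞) ^ p * ((N : ℝ≥0∞) ^ (-1 : ℝ) * ∑ i ∈ Finset.range N, a i ^ p) := by
        rw [hinv, ENNReal.rpow_neg_one]
    _ = (N : ℝ≥0∞) ^ (p - 1) * ∑ i ∈ Finset.range N, a i ^ p := by
        rw [← mul_assoc, ← ENNReal.rpow_add _ _ hN0 hNt, ← sub_eq_add_neg]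

/-- Splitting inequality `(a+b)^p ≤ c^p a^p + (1+(c-1)⁻¹)^p b^p`. -/
lemma rpow_add_le {p : ℝ} (hp : 1 ≤ p) {a b c : ℝ≥0∞} (hc : 1 < c) (hc' : c ≠ ∞) :
    (a + b) ^ p ≤ c ^ p * a ^ p + (1 + (c - 1)⁻¹) ^ p * b ^ p := by
  have hp0 : (0:ℝ) ≤ p := by linarith
  rcases le_or_gt b ((c - 1) * a) with hb | hb
  · have h1 : a + b ≤ c * a := by
      calc a + b ≤ a + (c - 1) * a := add_le_add_right hb a
        _ = (1 + (c - 1)) * a := by rw [add_mul, one_mul]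
        _ = c * a := by rw [add_tsub_cancel_of_le hc.le]
    calc (a + b) ^ p ≤ (c * a) ^ p := ENNReal.rpow_le_rpow h1 hp0
      _ = c ^ p * a ^ p := ENNReal.mul_rpow_of_nonneg _ _ hp0
      _ ≤ _ := le_self_add
  · have hc1 : c - 1 ≠ 0 := by
      simp only [ne_eq, tsub_eq_zero_iff_le, not_le]; exact hc
    have hc1' : c - 1 ≠ ∞ := (tsub_le_self.trans_lt hc'.lt_top).ne
    have ha : a ≤ (c - 1)⁻¹ * b := by
      have h' := mul_le_mul_right hb.le (c - 1)⁻¹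
      rwa [← mul_assoc, ENNReal.inv_mul_cancel hc1 hc1', one_mul] at h'
    have h1 : a + b ≤ (1 + (c - 1)⁻¹) * b := by
      calc a + b ≤ (c - 1)⁻¹ * b + b := add_le_add_left ha b
        _ = (1 + (c - 1)⁻¹) * b := by ring
    calc (a + b) ^ p ≤ ((1 + (c - 1)⁻¹) * b) ^ p := ENNReal.rpow_le_rpow h1 hp0
      _ = (1 + (c - 1)⁻¹) ^ p * b ^ p := ENNReal.mul_rpow_of_nonneg _ _ hp0
      _ ≤ _ := le_add_self

/-- If `X ≤ c^p Y` for all finite `c > 1`, then `X ≤ Y`. -/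
lemma le_of_forall_rpow_mul_le {p : ℝ} (hp : 0 < p) {X Y : ℝ≥0∞}
    (h : ∀ c : ℝ≥0∞, 1 < c → c ≠ ∞ → X ≤ c ^ p * Y) : X ≤ Y := by
  by_contra hlt
  push_neg at hlt
  have hY : Y ≠ ∞ := hlt.ne_top
  have h2 : X ≤ 2 ^ p * Y := h 2 (by norm_num) (by norm_num)
  have hY0 : Y ≠ 0 := by
    rintro rfl
    rw [mul_zero] at h2
    exact absurd hlt (by simpa using h2)
  have hX : X ≠ ∞ := by
    refine ne_top_of_le_ne_top ?_ h2
    exact ENNReal.mul_ne_top (ENNReal.rpow_ne_top_of_nonneg hp.le (by norm_num)) hY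
  set c₀ : ℝ≥0∞ := (X / Y) ^ (1 / p) with hc₀
  have hdiv1 : 1 < X / Y := by
    rw [ENNReal.lt_div_iff_mul_lt (Or.inl hY0) (Or.inl hY)]
    simpa using hlt
  have hdivt : X / Y ≠ ∞ := (ENNReal.div_lt_top hX hY0).ne
  have hc₀1 : 1 < c₀ := by
    have := ENNReal.rpow_lt_rpow hdiv1 (by positivity : (0:ℝ) < 1 / p)
    simpa [hc₀] using this
  have hc₀t : c₀ ≠ ∞ := ENNReal.rpow_ne_top_of_nonneg (by positivity) hdivt
  set c : ℝ≥0∞ := (1 + c₀) / 2 with hc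
  have hct : c ≠ ∞ := by
    simp only [hc]
    exact (ENNReal.div_lt_top (by simp [ENNReal.add_ne_top, hc₀t]) (by norm_num)).ne
  have hc1 : 1 < c := by
    rw [hc, ENNReal.lt_div_iff_mul_lt (by norm_num) (by norm_num)]
    calc (1:ℝ≥0∞) * 2 = 1 + 1 := by norm_num
      _ < 1 + c₀ := ENNReal.add_lt_add_left (by norm_num) hc₀1
  have hcc₀ : c < c₀ := by
    rw [hc, ENNReal.div_lt_iff (by norm_num) (by norm_num)]
    calc 1 + c₀ < c₀ + c₀ := ENNReal.add_lt_add_right hc₀t hc₀1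
      _ = c₀ * 2 := by rw [mul_two]
  have hfinal : c₀ ^ p * Y = X := by
    rw [hc₀, ← ENNReal.rpow_mul, one_div_mul_cancel hp.ne', ENNReal.rpow_one]
    exact ENNReal.div_mul_cancel hY0 hY
  have : X < X := by
    calc X ≤ c ^ p * Y := h c hc1 hct
      _ < c₀ ^ p * Y := by
        rw [ENNReal.mul_lt_mul_iff_left hY0 hY]
        exact ENNReal.rpow_lt_rpow hcc₀ hp
      _ = X := hfinal
  exact absurd this (lt_irrefl X)


/-- Sums of `pVar` along a weak chain. -/
lemma sum_pVar_chain {K : ℕ} {c : ℕ → ℝ} (hmono : ∀ j < K, c j ≤ c (j + 1)) :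
    (∑ j ∈ Finset.range K, pVar p x (c j) (c (j + 1))) ≤ pVar p x (c 0) (c K) := by
  have hc : ∀ j ≤ K, c 0 ≤ c j := by
    intro j hj
    induction j with
    | zero => exact le_rfl
    | succ k ih => exact (ih (by omega)).trans (hmono k (by omega))
  have key : ∀ K' ≤ K, (∑ j ∈ Finset.range K', pVar p x (c j) (c (j + 1))) ≤
      pVar p x (c 0) (c K') := by
    intro K' hK'
    induction K' with
    | zero => simp [pVar_self]
    | succ k ih =>
      rw [Finset.sum_range_succ]
      exact (add_le_add (ih (by omega)) le_rfl).trans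
        (pVar_superadd (hc k (by omega)) (hmono k (by omega)))
  exact key K le_rfl

/-- Continuity of `x` gives small `edist`-powers near `σ`. -/
lemma edist_small {T : ℝ} (hp : 0 < p) (hx : ContinuousOn x (Set.Icc 0 T)) {σ : ℝ}
    (hσ : σ ∈ Set.Icc (0:ℝ) T) {ε : ℝ≥0∞} (hε : 0 < ε) :
    ∃ δ > 0, ∀ u ∈ Set.Icc (0:ℝ) T, |u - σ| < δ → edist (x u) (x σ) ^ p < ε := by
  set ε' := min ε 1 with hε'
  have hε'0 : 0 < ε' := lt_min hε (by norm_num)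
  have hε't : ε' ≠ ∞ := by
    simp only [hε', ne_eq, min_eq_top, not_and]
    intro h; norm_num
  set e := ε'.toReal with he
  have he0 : 0 < e := ENNReal.toReal_pos hε'0.ne' hε't
  set r := (e / 2) ^ (1 / p) with hr
  have hr0 : 0 < r := Real.rpow_pos_of_pos (by linarith) _
  have hrp : r ^ p = e / 2 := by
    rw [hr, ← Real.rpow_mul (by linarith), one_div_mul_cancel hp.ne', Real.rpow_one]
  have hcw : ContinuousWithinAt x (Set.Icc 0 T) σ := hx σ hσ
  rw [Metric.continuousWithinAt_iff] at hcw
  obtain ⟨δ, hδ0, hd⟩ := hcw r hr0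
  refine ⟨δ, hδ0, fun u hu hud => ?_⟩
  have hdist : dist (x u) (x σ) < r := hd hu (by rwa [Real.dist_eq])
  have h1 : edist (x u) (x σ) ^ p = ENNReal.ofReal (dist (x u) (x σ) ^ p) := by
    rw [edist_dist, ← ENNReal.ofReal_rpow_of_nonneg dist_nonneg hp.le]
  rw [h1]
  calc ENNReal.ofReal (dist (x u) (x σ) ^ p) < ENNReal.ofReal (r ^ p) := by
        rw [ENNReal.ofReal_lt_ofReal_iff (by positivity)]
        exact Real.rpow_lt_rpow dist_nonneg hdist hp
    _ = ENNReal.ofReal (e / 2) := by rw [hrp]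
    _ < ENNReal.ofReal e := by
        rw [ENNReal.ofReal_lt_ofReal_iff he0]
        linarith
    _ = ε' := ENNReal.ofReal_toReal hε't
    _ ≤ ε := min_le_left _ _

/-- Key lemma: the `p`-variation vanishes near the diagonal (from the right). -/
lemma exists_right_small {T σ : ℝ} (hp : 0 < p) (hx : ContinuousOn x (Set.Icc 0 T))
    (hfin : pVar p x 0 T ≠ ∞) (hσ0 : 0 ≤ σ) (hσT : σ < T) {ε : ℝ≥0∞} (hε : 0 < ε) :
    ∃ t, σ < t ∧ t ≤ T ∧ pVar p x σ t ≤ ε := by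
  by_contra hcon
  push_neg at hcon
  have hεt : ε ≠ ∞ := by
    intro h
    have := hcon T hσT le_rfl
    rw [h] at this
    exact absurd this (not_lt.2 le_top)
  set ε2 := ε / 2 with hε2
  have hε20 : 0 < ε2 := ENNReal.div_pos hε.ne' (by norm_num)
  have hε2t : ε2 ≠ ∞ := (ENNReal.div_lt_top hεt (by norm_num)).ne
  have hhalves : ε2 + ε2 = ε := ENNReal.add_halves ε
  obtain ⟨δ, hδ0, hδ⟩ := edist_small hp hx (Set.mem_Icc.2 ⟨hσ0, hσT.le⟩) hε20
  set t₀ := min T (σ + δ / 2) with ht₀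
  have hσt₀ : σ < t₀ := lt_min hσT (by linarith)
  have ht₀T : t₀ ≤ T := min_le_left _ _
  have hsmall : ∀ u, σ ≤ u → u ≤ t₀ → edist (x σ) (x u) ^ p < ε2 := by
    intro u h1 h2
    rw [edist_comm]
    refine hδ u (Set.mem_Icc.2 ⟨hσ0.trans h1, h2.trans ht₀T⟩) ?_
    rw [abs_sub_lt_iff]
    constructor
    · have : u ≤ σ + δ / 2 := h2.trans (min_le_right _ _)
      linarith
    · linarith
  have claim : ∀ t, σ < t → t ≤ t₀ → ∃ v, σ < v ∧ v < t ∧ ε2 ≤ pVar p x v t := by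
    intro t h1 h2
    have hεlt : ε < pVar p x σ t := hcon t h1 (h2.trans ht₀T)
    obtain ⟨n, u, hu, h0, hn, hlt⟩ := exists_partition_of_lt_pVar hεlt
    match n, hn, hlt with
    | 0, hn, hlt => exact absurd hlt (by rw [psum]; simp)
    | 1, hn, hlt =>
      exfalso
      rw [psum] at hlt
      simp only [Finset.sum_range_one] at hlt
      have : edist (x (u 0)) (x (u 1)) ^ p < ε2 := by
        rw [h0]
        exact hsmall (u 1) (by rw [← h0]; exact (hu (by simp) (by simp [Set.mem_Iic]) one_pos).le)
          (by rw [hn]; exact h2)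
      have h3 : ε < ε2 := hlt.trans this
      have h4 : ε2 ≤ ε := ENNReal.half_le_self
      exact absurd (h3.trans_le h4) (lt_irrefl ε)
    | (m + 2), hn, hlt =>
      set n' := m + 2 with hn'
      refine ⟨u 1, ?_, ?_, ?_⟩
      · rw [← h0]
        exact hu (by simp [Set.mem_Iic]) (by simp [Set.mem_Iic]; omega) one_pos
      · rw [← hn]
        exact hu (by simp [Set.mem_Iic]; omega) (by simp [Set.mem_Iic]) (by omega)
      · -- decompose the sum
        have hdecomp : psum p x n' u =
            (∑ i ∈ Finset.range (m + 1), edist (x (u (i + 1))) (x (u (i + 1 + 1))) ^ p)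
              + edist (x (u 0)) (x (u 1)) ^ p := by
          rw [psum, Finset.sum_range_succ']
        have hrest : (∑ i ∈ Finset.range (m + 1),
            edist (x (u (i + 1))) (x (u (i + 1 + 1))) ^ p) ≤ pVar p x (u 1) t := by
          refine chain_le_pVar (c := fun i => u (i + 1)) hp ?_ le_rfl ?_
          · intro j hj
            exact (hu (by simp [Set.mem_Iic]; omega) (by simp [Set.mem_Iic]; omega)
              (by omega)).le
          · show u (m + 1 + 1) ≤ t
            have he : m + 1 + 1 = n' := by omega
            rw [he, hn]
        have hfirst : edist (x (u 0)) (x (u 1)) ^ p < ε2 := by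
          rw [h0]
          refine hsmall (u 1) ?_ ?_
          · rw [← h0]
            exact (hu (by simp [Set.mem_Iic]) (by simp [Set.mem_Iic]; omega) one_pos).le
          · refine le_trans ?_ h2
            rw [← hn]
            exact (hu (by simp [Set.mem_Iic]; omega) (by simp [Set.mem_Iic]) (by omega)).le
        have : ε ≤ pVar p x (u 1) t + ε2 := by
          calc ε ≤ psum p x n' u := hlt.le
            _ = _ + edist (x (u 0)) (x (u 1)) ^ p := hdecomp
            _ ≤ pVar p x (u 1) t + ε2 := add_le_add hrest hfirst.le
        rw [← hhalves] at this
        exact (ENNReal.add_le_add_iff_right hε2t).1 this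
  -- build the decreasing sequence
  have step : ∀ v : {r : ℝ // σ < r ∧ r ≤ t₀}, ∃ w : {r : ℝ // σ < r ∧ r ≤ t₀},
      w.1 < v.1 ∧ ε2 ≤ pVar p x w.1 v.1 := by
    rintro ⟨t, h1, h2⟩
    obtain ⟨v, hv1, hv2, hv3⟩ := claim t h1 h2
    exact ⟨⟨v, hv1, (hv2.le.trans h2)⟩, hv2, hv3⟩
  choose f hf1 hf2 using step
  set g : ℕ → {r : ℝ // σ < r ∧ r ≤ t₀} := fun k => f^[k] ⟨t₀, hσt₀, le_rfl⟩ with hg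
  have hgsucc : ∀ k, g (k + 1) = f (g k) := by
    intro k
    rw [hg]
    exact Function.iterate_succ_apply' f k _
  have hglt : ∀ k, (g (k + 1)).1 < (g k).1 := fun k => by rw [hgsucc]; exact hf1 (g k)
  have hgvar : ∀ k, ε2 ≤ pVar p x (g (k + 1)).1 (g k).1 := fun k => by
    rw [hgsucc]; exact hf2 (g k)
  have hbound : ∀ K : ℕ, (K : ℝ≥0∞) * ε2 ≤ pVar p x 0 T := by
    intro K
    set c : ℕ → ℝ := fun j => (g (K - j)).1 with hcdef
    have hcmono : ∀ j < K, c j ≤ c (j + 1) := by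
      intro j hj
      have : K - j = (K - (j + 1)) + 1 := by omega
      rw [hcdef]
      simp only
      rw [this]
      exact (hglt (K - (j + 1))).le
    have hsum : (∑ j ∈ Finset.range K, pVar p x (c j) (c (j + 1))) ≤ pVar p x (c 0) (c K) :=
      sum_pVar_chain hcmono
    have hterm : ∀ j ∈ Finset.range K, ε2 ≤ pVar p x (c j) (c (j + 1)) := by
      intro j hj
      have hjK := Finset.mem_range.1 hj
      have : K - j = (K - (j + 1)) + 1 := by omega
      rw [hcdef]
      simp only
      rw [this]
      exact hgvar (K - (j + 1))
    calc (K : ℝ≥0∞) * ε2 = K • ε2 := by rw [nsmul_eq_mul]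
      _ ≤ ∑ j ∈ Finset.range K, pVar p x (c j) (c (j + 1)) := by
          simpa using Finset.card_nsmul_le_sum (Finset.range K) _ _ hterm
      _ ≤ pVar p x (c 0) (c K) := hsum
      _ ≤ pVar p x 0 T := by
          refine pVar_mono ?_ ?_ ?_
          · simp only [hcdef]
            exact hσ0.trans (g (K - 0)).2.1.le
          · simp only [hcdef, Nat.sub_zero, Nat.sub_self]
            have hg0 : (g 0).1 = t₀ := rfl
            exact le_trans (g K).2.2 hg0.ge
          · simp only [hcdef, Nat.sub_self]
            have hg0 : (g 0).1 = t₀ := rfl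
            rw [hg0]
            exact ht₀T
  obtain ⟨K, hK⟩ := ENNReal.exists_nat_gt
    (show pVar p x 0 T / ε2 ≠ ∞ from (ENNReal.div_lt_top hfin hε20.ne').ne)
  have := hbound K
  rw [← ENNReal.le_div_iff_mul_le (Or.inl hε20.ne') (Or.inl hε2t)] at this
  exact absurd (this.trans_lt hK) (lt_irrefl _)


/-- Splitting a `pVar` at an intermediate point, with a continuity correction. -/
lemma pVar_split_le (hp : 1 ≤ p) {s σ' t : ℝ} (hs : s ≤ σ') (ht : σ' ≤ t) {c : ℝ≥0∞}
    (hc : 1 < c) (hc' : c ≠ ∞) {b : ℝ≥0∞}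
    (hb : ∀ u, σ' ≤ u → u ≤ t → edist (x σ') (x u) ^ p ≤ b) :
    pVar p x s t ≤ c ^ p * pVar p x s σ' + (1 + (c - 1)⁻¹) ^ p * b + pVar p x σ' t := by
  classical
  have hp0 : 0 < p := by linarith
  have h1c : (1 : ℝ≥0∞) ≤ c ^ p := by
    calc (1:ℝ≥0∞) = 1 ^ p := (ENNReal.one_rpow p).symm
      _ ≤ c ^ p := ENNReal.rpow_le_rpow hc.le hp0.le
  refine pVar_le fun n u hu h0 hn => ?_
  obtain ⟨j, hj_le, hj_spec, hj_gt⟩ :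
      ∃ j, j ≤ n ∧ u j ≤ σ' ∧ ∀ k, j < k → k ≤ n → σ' < u k := by
    have hdec : DecidablePred (fun i : ℕ => u i ≤ σ') := fun i => Real.decidableLE _ _
    refine ⟨@Nat.findGreatest (fun i => u i ≤ σ') hdec n, @Nat.findGreatest_le _ hdec n, ?_, ?_⟩
    · exact Nat.findGreatest_spec (P := fun i => u i ≤ σ') (Nat.zero_le n)
        (by show u 0 ≤ σ'; rw [h0]; exact hs)
    · exact fun k h1 h2 => not_le.1
        (Nat.findGreatest_is_greatest (P := fun i => u i ≤ σ') h1 h2)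
  rcases eq_or_lt_of_le hj_le with rfl | hjn
  · -- j = n : the whole partition lies in [s, σ']
    have : psum p x j u ≤ pVar p x s σ' := by
      rw [psum]
      refine chain_le_pVar hp0 (fun k hk => (hu (Set.mem_Iic.2 (by omega))
        (Set.mem_Iic.2 (by omega)) (by omega)).le) (h0 ▸ le_rfl) hj_spec
    calc psum p x j u ≤ pVar p x s σ' := this
      _ ≤ c ^ p * pVar p x s σ' := le_mul_of_one_le_left (zero_le) h1c
      _ ≤ _ := le_add_right (le_add_right le_rfl)
  · -- j < n
    set f : ℕ → ℝ≥0∞ := fun i => edist (x (u i)) (x (u (i + 1))) ^ p with hf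
    have hσu : σ' < u (j + 1) := hj_gt (j + 1) (by omega) (by omega)
    have hdecomp : psum p x n u = (∑ i ∈ Finset.range j, f i) + f j
        + (∑ k ∈ Finset.range (n - j - 1), f (j + 1 + k)) := by
      simp only [hf]
      conv_lhs => rw [psum, show n = j + ((n - j - 1) + 1) by omega]
      rw [Finset.sum_range_add, Finset.sum_range_succ']
      have hidx : (∑ i ∈ Finset.range (n - j - 1),
            edist (x (u (j + (i + 1)))) (x (u (j + (i + 1) + 1))) ^ p)
          = ∑ k ∈ Finset.range (n - j - 1),
            edist (x (u (j + 1 + k))) (x (u (j + 1 + k + 1))) ^ p := by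
        refine Finset.sum_congr rfl fun i _ => ?_
        have e1 : j + (i + 1) = j + 1 + i := by omega
        rw [e1]
      rw [hidx]
      simp only [Nat.add_zero]
      ring
    have hA : (∑ i ∈ Finset.range j, f i) + edist (x (u j)) (x σ') ^ p
        ≤ pVar p x s σ' := by
      set cc : ℕ → ℝ := fun i => if i ≤ j then u i else σ' with hcc
      have hsum_eq : (∑ i ∈ Finset.range j, f i) + edist (x (u j)) (x σ') ^ p
          = ∑ i ∈ Finset.range (j + 1), edist (x (cc i)) (x (cc (i + 1))) ^ p := by
        rw [Finset.sum_range_succ]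
        congr 1
        · refine Finset.sum_congr rfl fun i hi => ?_
          have hi' := Finset.mem_range.1 hi
          have hij : i ≤ j := by omega
          have hij1 : i + 1 ≤ j := by omega
          have e1 : cc i = u i := by simp [hcc, hij]
          have e2 : cc (i + 1) = u (i + 1) := by simp [hcc, hij1]
          rw [e1, e2]
        · have e1 : cc j = u j := by simp [hcc]
          have e2 : cc (j + 1) = σ' := by simp [hcc]
          rw [e1, e2]
      rw [hsum_eq]
      refine chain_le_pVar hp0 ?_ ?_ ?_
      · intro k hk
        rcases lt_or_eq_of_le (Nat.lt_succ_iff.1 hk) with h | h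
        · have hkj : k ≤ j := by omega
          have hkj1 : k + 1 ≤ j := by omega
          have e1 : cc k = u k := by simp [hcc, hkj]
          have e2 : cc (k + 1) = u (k + 1) := by simp [hcc, hkj1]
          rw [e1, e2]
          exact (hu (Set.mem_Iic.2 (by omega)) (Set.mem_Iic.2 (by omega)) (by omega)).le
        · subst h
          have e1 : cc k = u k := by simp [hcc]
          have e2 : cc (k + 1) = σ' := by simp [hcc]
          rw [e1, e2]
          exact hj_spec
      · have : cc 0 = u 0 := by simp [hcc]
        rw [this, h0]
      · have : cc (j + 1) = σ' := by simp [hcc]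
        rw [this]
    have hcross : f j ≤ c ^ p * edist (x (u j)) (x σ') ^ p + (1 + (c - 1)⁻¹) ^ p * b := by
      have htri : edist (x (u j)) (x (u (j + 1)))
          ≤ edist (x (u j)) (x σ') + edist (x σ') (x (u (j + 1))) := edist_triangle _ _ _
      have hub : u (j + 1) ≤ t := by
        rcases eq_or_lt_of_le (show j + 1 ≤ n by omega) with h | h
        · rw [← hn, h]
        · rw [← hn]
          exact (hu (Set.mem_Iic.2 (by omega)) (Set.mem_Iic.2 le_rfl) h).le
      calc f j ≤ (edist (x (u j)) (x σ') + edist (x σ') (x (u (j + 1)))) ^ p :=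
            ENNReal.rpow_le_rpow htri hp0.le
        _ ≤ c ^ p * edist (x (u j)) (x σ') ^ p
            + (1 + (c - 1)⁻¹) ^ p * edist (x σ') (x (u (j + 1))) ^ p :=
            rpow_add_le hp hc hc'
        _ ≤ c ^ p * edist (x (u j)) (x σ') ^ p + (1 + (c - 1)⁻¹) ^ p * b :=
            add_le_add_right (mul_le_mul_right (hb _ hσu.le hub) _) _
    have hB : (∑ k ∈ Finset.range (n - j - 1), f (j + 1 + k)) ≤ pVar p x σ' t := by
      have : (∑ k ∈ Finset.range (n - j - 1), f (j + 1 + k)) =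
          ∑ k ∈ Finset.range (n - j - 1),
            edist (x ((fun k => u (j + 1 + k)) k)) (x ((fun k => u (j + 1 + k)) (k + 1))) ^ p := by
        refine Finset.sum_congr rfl fun k _ => ?_
        simp only [hf]
        have e : j + 1 + (k + 1) = j + 1 + k + 1 := by omega
        rw [e]
      rw [this]
      refine chain_le_pVar hp0 ?_ hσu.le ?_
      · intro k hk
        exact (hu (Set.mem_Iic.2 (by omega)) (Set.mem_Iic.2 (by omega)) (by omega)).le
      · show u (j + 1 + (n - j - 1)) ≤ t
        have e : j + 1 + (n - j - 1) = n := by omega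
        rw [e, hn]
    calc psum p x n u = (∑ i ∈ Finset.range j, f i) + f j
          + (∑ k ∈ Finset.range (n - j - 1), f (j + 1 + k)) := hdecomp
      _ ≤ ((∑ i ∈ Finset.range j, f i)
            + (c ^ p * edist (x (u j)) (x σ') ^ p + (1 + (c - 1)⁻¹) ^ p * b))
          + pVar p x σ' t := add_le_add (add_le_add_right hcross _) hB
      _ ≤ (c ^ p * ((∑ i ∈ Finset.range j, f i) + edist (x (u j)) (x σ') ^ p)
            + (1 + (c - 1)⁻¹) ^ p * b) + pVar p x σ' t := by
          refine add_le_add_left ?_ _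
          rw [mul_add, ← add_assoc]
          exact add_le_add_left (add_le_add_left
            (le_mul_of_one_le_left (zero_le) h1c) _) _
      _ ≤ (c ^ p * pVar p x s σ' + (1 + (c - 1)⁻¹) ^ p * b) + pVar p x σ' t := by
          refine add_le_add_left (add_le_add_left (mul_le_mul_right hA _) _) _

/-- Order lemma for double clamps. -/
lemma clamp_eq {a b s' t' : ℝ} (hab : a ≤ b) (hst : s' ≤ t')
    (hne : max a (min s' b) < max a (min t' b)) :
    max a (min s' b) = max s' (min a t') ∧ max a (min t' b) = max s' (min b t') := by
  have hs'b : s' ≤ b := by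
    by_contra h
    push_neg at h
    have h1 : min s' b = b := min_eq_right h.le
    have h2 : min t' b = b := min_eq_right (h.le.trans hst) |>.symm ▸ min_eq_right (le_trans h.le hst)
    rw [h1] at hne
    have : max a (min t' b) ≤ max a b := max_le_max le_rfl (min_le_right _ _)
    exact absurd (hne.trans_le this) (lt_irrefl _)
  have hat' : a ≤ t' := by
    by_contra h
    push_neg at h
    have h1 : min t' b ≤ t' := min_le_left _ _
    have h2 : max a (min t' b) = a := max_eq_left (h1.trans h.le)
    have h3 : a ≤ max a (min s' b) := le_max_left _ _
    rw [h2] at hne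
    exact absurd (h3.trans_lt hne) (lt_irrefl _)
  have hm1 : max a (min s' b) = max a s' := by rw [min_eq_left hs'b]
  have hmin_ge_a : a ≤ min t' b := by
    by_contra h
    push_neg at h
    have h2 : max a (min t' b) = a := max_eq_left h.le
    have h3 : a ≤ max a (min s' b) := le_max_left _ _
    rw [h2] at hne
    exact absurd (h3.trans_lt hne) (lt_irrefl _)
  have hmin_ge_s : s' ≤ min t' b := le_min hst hs'b
  constructor
  · rw [hm1, min_eq_left hat', max_comm]
  · rw [max_eq_right hmin_ge_a, min_comm b t', max_eq_right hmin_ge_s]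

/-- The grid decomposition bound: `pVar s t ≤ N^(p-1) ∑ pVar (σ k) (σ (k+1))`. -/
lemma pVar_le_grid (hp : 1 ≤ p) {s t : ℝ} {N : ℕ} (hN : N ≠ 0) {σ : ℕ → ℝ}
    (hσmono : ∀ k < N, σ k ≤ σ (k + 1)) (hσ0 : σ 0 = s) (hσN : σ N = t) :
    pVar p x s t ≤ (N : ℝ≥0∞) ^ (p - 1) *
      ∑ k ∈ Finset.range N, pVar p x (σ k) (σ (k + 1)) := by
  have hp0 : 0 < p := by linarith
  have hσm : ∀ j k, j ≤ k → k ≤ N → σ j ≤ σ k := by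
    intro j k hjk hkN
    induction k with
    | zero =>
      have : j = 0 := by omega
      rw [this]
    | succ l ih =>
      rcases Nat.lt_succ_iff_lt_or_eq.1 (Nat.lt_succ_of_le hjk) with h | h
      · exact (ih (by omega) (by omega)).trans (hσmono l (by omega))
      · subst h; exact le_rfl
  refine pVar_le fun n u hu h0 hn => ?_
  have humono : ∀ i j, i ≤ j → j ≤ n → u i ≤ u j := by
    intro i j hij hjn
    rcases eq_or_lt_of_le hij with rfl | h
    · exact le_rfl
    · exact (hu (Set.mem_Iic.2 (by omega)) (Set.mem_Iic.2 hjn) h).le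
  set m : ℕ → ℕ → ℝ := fun i k => max (u i) (min (σ k) (u (i + 1))) with hm
  have hm0 : ∀ i < n, m i 0 = u i := by
    intro i hi
    have h1 : σ 0 ≤ u (i + 1) := by rw [hσ0, ← h0]; exact humono 0 (i+1) (by omega) (by omega)
    have h2 : σ 0 ≤ u i := by rw [hσ0, ← h0]; exact humono 0 i (by omega) (by omega)
    rw [hm]
    simp only
    rw [min_eq_left h1, max_eq_left h2]
  have hmN : ∀ i < n, m i N = u (i + 1) := by
    intro i hi
    have h1 : u (i + 1) ≤ σ N := by rw [hσN, ← hn]; exact humono (i+1) n (by omega) le_rfl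
    have h2 : u i ≤ u (i + 1) := humono i (i+1) (by omega) (by omega)
    rw [hm]
    simp only
    rw [min_eq_right h1, max_eq_right h2]
  have hmmono : ∀ i, ∀ k < N, m i k ≤ m i (k + 1) := by
    intro i k hk
    exact max_le_max le_rfl (min_le_min (hσmono k hk) le_rfl)
  -- telescoping and power mean
  have hstep : ∀ i < n, edist (x (u i)) (x (u (i + 1))) ^ p ≤
      (N : ℝ≥0∞) ^ (p - 1) * ∑ k ∈ Finset.range N, edist (x (m i k)) (x (m i (k + 1))) ^ p := by
    intro i hi
    have htel : edist (x (u i)) (x (u (i + 1))) ≤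
        ∑ k ∈ Finset.range N, edist (x (m i k)) (x (m i (k + 1))) := by
      have := edist_le_range_sum_edist (fun k => x (m i k)) N
      rwa [hm0 i hi, hmN i hi] at this
    calc edist (x (u i)) (x (u (i + 1))) ^ p
        ≤ (∑ k ∈ Finset.range N, edist (x (m i k)) (x (m i (k + 1)))) ^ p :=
          ENNReal.rpow_le_rpow htel hp0.le
      _ ≤ _ := rpow_sum_le_card_mul_sum hp N hN _
  have hcol : ∀ k < N, (∑ i ∈ Finset.range n, edist (x (m i k)) (x (m i (k + 1))) ^ p)
      ≤ pVar p x (σ k) (σ (k + 1)) := by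
    intro k hk
    set q : ℕ → ℝ := fun i => max (σ k) (min (u i) (σ (k + 1))) with hq
    have hterm : ∀ i < n, edist (x (m i k)) (x (m i (k + 1))) ^ p
        ≤ edist (x (q i)) (x (q (i + 1))) ^ p := by
      intro i hi
      rcases eq_or_lt_of_le (hmmono i k hk) with he | hlt
      · rw [← he, edist_self, ENNReal.zero_rpow_of_pos hp0]
        exact zero_le
      · obtain ⟨e1, e2⟩ := clamp_eq (humono i (i+1) (by omega) (by omega)) (hσmono k hk) hlt
        simp only [hm, hq]
        rw [e1, e2]
    calc (∑ i ∈ Finset.range n, edist (x (m i k)) (x (m i (k + 1))) ^ p)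
        ≤ ∑ i ∈ Finset.range n, edist (x (q i)) (x (q (i + 1))) ^ p :=
          Finset.sum_le_sum (fun i hi => hterm i (Finset.mem_range.1 hi))
      _ ≤ pVar p x (σ k) (σ (k + 1)) := by
          refine chain_le_pVar hp0 ?_ (le_max_left _ _) ?_
          · intro j hj
            exact max_le_max le_rfl (min_le_min (humono j (j+1) (by omega) (by omega)) le_rfl)
          · rw [hq]
            simp only
            exact max_le (hσmono k hk) (min_le_right _ _)
  calc psum p x n u ≤ ∑ i ∈ Finset.range n, (N : ℝ≥0∞) ^ (p - 1) *
        ∑ k ∈ Finset.range N, edist (x (m i k)) (x (m i (k + 1))) ^ p := by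
        rw [psum]
        exact Finset.sum_le_sum fun i hi => hstep i (Finset.mem_range.1 hi)
    _ = (N : ℝ≥0∞) ^ (p - 1) * ∑ k ∈ Finset.range N,
          ∑ i ∈ Finset.range n, edist (x (m i k)) (x (m i (k + 1))) ^ p := by
        rw [← Finset.mul_sum, Finset.sum_comm]
    _ ≤ (N : ℝ≥0∞) ^ (p - 1) * ∑ k ∈ Finset.range N, pVar p x (σ k) (σ (k + 1)) :=
        mul_le_mul_right (Finset.sum_le_sum fun k hk => hcol k (Finset.mem_range.1 hk)) _

section Greedy
variable {α' : ℝ≥0∞} {T : ℝ}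

lemma greedy_bounds (hT : 0 ≤ T) :
    ∀ n, 0 ≤ greedyPoints (fun a b => pVar p x a b) α' T n ∧
      greedyPoints (fun a b => pVar p x a b) α' T n ≤ T ∧
      greedyPoints (fun a b => pVar p x a b) α' T n
        ≤ greedyPoints (fun a b => pVar p x a b) α' T (n + 1) := by
  set σ := greedyPoints (fun a b => pVar p x a b) α' T with hσ
  have key : ∀ n, (0 ≤ σ n ∧ σ n ≤ T) → σ n ≤ σ (n + 1) ∧ σ (n + 1) ≤ T := by
    intro n ⟨h0, hT'⟩
    rw [hσ, greedyPoints]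
    split_ifs with hbr
    · have hbdd : BddBelow {t | t ∈ Set.Ioc (σ n) T ∧ α' ≤ pVar p x (σ n) t} :=
        ⟨σ n, fun r hr => hr.1.1.le⟩
      obtain ⟨t₀, ht₀mem, ht₀⟩ := hbr
      constructor
      · exact le_csInf ⟨t₀, ht₀mem, ht₀⟩ (fun r hr => hr.1.1.le)
      · exact (csInf_le hbdd ⟨ht₀mem, ht₀⟩).trans ht₀mem.2
    · exact ⟨hT', le_rfl⟩
  have main : ∀ n, 0 ≤ σ n ∧ σ n ≤ T := by
    intro n
    induction n with
    | zero => exact ⟨le_rfl, hT⟩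
    | succ k ih =>
      obtain ⟨h1, h2⟩ := key k ih
      exact ⟨ih.1.trans h1, h2⟩
  exact fun n => ⟨(main n).1, (main n).2, (key n (main n)).1⟩

lemma greedy_le (hp : 1 ≤ p) (hα'0 : 0 < α') (hα't : α' ≠ ∞)
    (hx : ContinuousOn x (Set.Icc 0 T)) (n : ℕ)
    (h0n : 0 ≤ greedyPoints (fun a b => pVar p x a b) α' T n)
    (hnT : greedyPoints (fun a b => pVar p x a b) α' T n ≤ T) :
    pVar p x (greedyPoints (fun a b => pVar p x a b) α' T n)
      (greedyPoints (fun a b => pVar p x a b) α' T (n + 1)) ≤ α' := by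
  have hp0 : (0:ℝ) < p := by linarith
  set σn := greedyPoints (fun a b => pVar p x a b) α' T n with hσn
  rw [greedyPoints]
  split_ifs with hbr
  · -- if-branch: σ' = sInf S
    set S := {t | t ∈ Set.Ioc (σn) T ∧ α' ≤ pVar p x (σn) t} with hS
    have hbdd : BddBelow S := ⟨σn, fun r hr => hr.1.1.le⟩
    set σ' := sInf S with hσ'
    obtain ⟨t₀, ht₀mem, ht₀⟩ := hbr
    have hσ'σn : σn ≤ σ' := le_csInf ⟨t₀, ht₀mem, ht₀⟩ (fun r hr => hr.1.1.le)
    have hσ'T : σ' ≤ T := (csInf_le hbdd ⟨ht₀mem, ht₀⟩).trans ht₀mem.2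
    have hlt_all : ∀ r, σn < r → r < σ' → pVar p x σn r < α' := by
      intro r h1 h2
      by_contra hge
      push_neg at hge
      exact absurd (csInf_le hbdd ⟨⟨h1, h2.le.trans hσ'T⟩, hge⟩) (not_le.2 h2)
    refine pVar_le fun n' u hu h0 hn' => ?_
    rcases Nat.eq_zero_or_pos n' with rfl | hn'0
    · rw [psum]; simp
    refine le_of_forall_rpow_mul_le hp0 fun c hc hc' => ?_
    refine ENNReal.le_of_forall_pos_le_add fun η hη hfin' => ?_
    set d : ℝ≥0∞ := 1 + (c - 1)⁻¹ with hd
    have hc1 : c - 1 ≠ 0 := by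
      simp only [ne_eq, tsub_eq_zero_iff_le, not_le]; exact hc
    have hdt : d ≠ ∞ := by
      rw [hd]
      exact ENNReal.add_ne_top.2 ⟨by norm_num, ENNReal.inv_ne_top.2 hc1⟩
    have hdpt : d ^ p ≠ ∞ := ENNReal.rpow_ne_top_of_nonneg hp0.le hdt
    have hdp0 : d ^ p ≠ 0 := by
      refine (ENNReal.rpow_pos ?_ hdt).ne'
      rw [hd]
      exact lt_of_lt_of_le (by norm_num) le_self_add
    set ε := (η : ℝ≥0∞) / d ^ p with hε
    have hε0 : 0 < ε := ENNReal.div_pos (by exact_mod_cast hη.ne') hdpt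
    have humono : ∀ i j, i ≤ j → j ≤ n' → u i ≤ u j := by
      intro i j hij hjn
      rcases eq_or_lt_of_le hij with rfl | h
      · exact le_rfl
      · exact (hu (Set.mem_Iic.2 (by omega)) (Set.mem_Iic.2 hjn) h).le
    have hu_lt : u (n' - 1) < σ' := by
      rw [← hn']
      exact hu (Set.mem_Iic.2 (by omega)) (Set.mem_Iic.2 le_rfl) (by omega)
    have hσ'0 : 0 ≤ σ' := h0n.trans hσ'σn
    obtain ⟨δ, hδ0, hδ⟩ := edist_small hp0 hx (Set.mem_Icc.2 ⟨hσ'0, hσ'T⟩) hε0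
    set r := (max (u (n' - 1)) (σ' - δ / 2) + σ') / 2 with hr
    have h_max_lt : max (u (n' - 1)) (σ' - δ / 2) < σ' := max_lt hu_lt (by linarith)
    have hr1 : u (n' - 1) < r := by
      have h1 := le_max_left (u (n' - 1)) (σ' - δ / 2)
      rw [hr]; linarith
    have hr2 : r < σ' := by rw [hr]; linarith
    have hr3 : |r - σ'| < δ := by
      have h1 := le_max_right (u (n' - 1)) (σ' - δ / 2)
      rw [abs_sub_lt_iff]
      constructor <;> [linarith; skip]
      rw [hr]; linarith
    have hσnr : σn < r := by
      calc σn = u 0 := h0.symm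
        _ ≤ u (n' - 1) := humono 0 (n' - 1) (by omega) (by omega)
        _ < r := hr1
    have hr0T : r ∈ Set.Icc (0:ℝ) T := Set.mem_Icc.2 ⟨h0n.trans hσnr.le, hr2.le.trans hσ'T⟩
    have hεr : edist (x r) (x σ') ^ p < ε := hδ r hr0T hr3
    -- decompose psum
    have hdec : psum p x n' u = (∑ i ∈ Finset.range (n' - 1),
        edist (x (u i)) (x (u (i + 1))) ^ p) + edist (x (u (n' - 1))) (x (u n')) ^ p := by
      conv_lhs => rw [psum, show n' = (n' - 1) + 1 by omega]
      rw [Finset.sum_range_succ, show (n' - 1) + 1 = n' by omega]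
    -- the updated partition
    set u' := Function.update u n' r with hu'
    have hu'val : ∀ i ≤ n' - 1, u' i = u i := by
      intro i hi
      rw [hu']
      exact Function.update_of_ne (by omega) _ _
    have hu'n : u' n' = r := by rw [hu']; exact Function.update_self _ _ _
    have hu'mono : StrictMonoOn u' (Set.Iic n') := by
      intro a ha b hb hab
      rcases eq_or_lt_of_le (Set.mem_Iic.1 hb) with heq | hbn
      · rw [heq, hu'n, hu'val a (by omega)]
        calc u a ≤ u (n' - 1) := humono a (n' - 1) (by omega) (by omega)
          _ < r := hr1
      · rw [hu'val a (by omega), hu'val b (by omega)]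
        exact hu (Set.mem_Iic.2 (by omega)) (Set.mem_Iic.2 (by omega)) hab
    have hu'0 : u' 0 = σn := by rw [hu'val 0 (by omega), h0]
    have hpsum' : psum p x n' u' = (∑ i ∈ Finset.range (n' - 1),
        edist (x (u i)) (x (u (i + 1))) ^ p) + edist (x (u (n' - 1))) (x r) ^ p := by
      conv_lhs => rw [psum, show n' = (n' - 1) + 1 by omega]
      rw [Finset.sum_range_succ, show (n' - 1) + 1 = n' by omega]
      congr 1
      · refine Finset.sum_congr rfl fun i hi => ?_
        have hi' := Finset.mem_range.1 hi
        rw [hu'val i (by omega), hu'val (i + 1) (by omega)]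
      · rw [hu'val (n' - 1) (by omega), hu'n]
    have hA : (∑ i ∈ Finset.range (n' - 1), edist (x (u i)) (x (u (i + 1))) ^ p)
        + edist (x (u (n' - 1))) (x r) ^ p ≤ α' := by
      rw [← hpsum']
      calc psum p x n' u' ≤ pVar p x σn r := psum_le_pVar hu'mono hu'0 hu'n
        _ ≤ α' := (hlt_all r hσnr hr2).le
    have h1c : (1:ℝ≥0∞) ≤ c ^ p := by
      calc (1:ℝ≥0∞) = 1 ^ p := (ENNReal.one_rpow p).symm
        _ ≤ c ^ p := ENNReal.rpow_le_rpow hc.le hp0.le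
    have hcross : edist (x (u (n' - 1))) (x (u n')) ^ p
        ≤ c ^ p * edist (x (u (n' - 1))) (x r) ^ p + (η : ℝ≥0∞) := by
      have htri : edist (x (u (n' - 1))) (x (u n'))
          ≤ edist (x (u (n' - 1))) (x r) + edist (x r) (x (u n')) := edist_triangle _ _ _
      calc edist (x (u (n' - 1))) (x (u n')) ^ p
          ≤ (edist (x (u (n' - 1))) (x r) + edist (x r) (x (u n'))) ^ p :=
            ENNReal.rpow_le_rpow htri hp0.le
        _ ≤ c ^ p * edist (x (u (n' - 1))) (x r) ^ p + d ^ p * edist (x r) (x (u n')) ^ p :=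
            rpow_add_le hp hc hc'
        _ ≤ c ^ p * edist (x (u (n' - 1))) (x r) ^ p + d ^ p * ε := by
            refine add_le_add_right (mul_le_mul_right ?_ _) _
            rw [hn']
            exact hεr.le
        _ = c ^ p * edist (x (u (n' - 1))) (x r) ^ p + (η : ℝ≥0∞) := by
            rw [hε, ENNReal.mul_div_cancel' (fun h => absurd h hdp0) (fun h => absurd h hdpt)]
    calc psum p x n' u
        = (∑ i ∈ Finset.range (n' - 1), edist (x (u i)) (x (u (i + 1))) ^ p)
          + edist (x (u (n' - 1))) (x (u n')) ^ p := hdec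
      _ ≤ (∑ i ∈ Finset.range (n' - 1), edist (x (u i)) (x (u (i + 1))) ^ p)
          + (c ^ p * edist (x (u (n' - 1))) (x r) ^ p + (η : ℝ≥0∞)) :=
          add_le_add_right hcross _
      _ ≤ c ^ p * ((∑ i ∈ Finset.range (n' - 1), edist (x (u i)) (x (u (i + 1))) ^ p)
          + edist (x (u (n' - 1))) (x r) ^ p) + (η : ℝ≥0∞) := by
          rw [mul_add, ← add_assoc]
          exact add_le_add_left (add_le_add_left
            (le_mul_of_one_le_left (zero_le) h1c) _) _
      _ ≤ c ^ p * α' + (η : ℝ≥0∞) := add_le_add_left (mul_le_mul_right hA _) _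
  · -- else-branch
    rcases eq_or_lt_of_le hnT with heq | hlt
    · rw [← heq, pVar_self]
      exact zero_le
    · push_neg at hbr
      exact (hbr T ⟨hlt, le_rfl⟩).le

lemma greedy_strict (hp : 1 ≤ p) (hα'0 : 0 < α') (hα't : α' ≠ ∞)
    (hx : ContinuousOn x (Set.Icc 0 T)) (hfin : pVar p x 0 T ≠ ∞) (n : ℕ)
    (h0n : 0 ≤ greedyPoints (fun a b => pVar p x a b) α' T n)
    (hnT : greedyPoints (fun a b => pVar p x a b) α' T n < T) :
    greedyPoints (fun a b => pVar p x a b) α' T n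
      < greedyPoints (fun a b => pVar p x a b) α' T (n + 1) := by
  have hp0 : (0:ℝ) < p := by linarith
  set σn := greedyPoints (fun a b => pVar p x a b) α' T n with hσn
  rw [greedyPoints]
  split_ifs with hbr
  · obtain ⟨t', ht'1, ht'2, ht'3⟩ := exists_right_small hp0 hx hfin h0n hnT
      (ENNReal.half_pos hα'0.ne')
    refine lt_of_lt_of_le ht'1 (le_csInf hbr fun r hr => ?_)
    by_contra hlt
    push_neg at hlt
    have : pVar p x σn r ≤ α' / 2 :=
      (pVar_mono le_rfl hr.1.1.le hlt.le).trans ht'3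
    exact absurd (hr.2.trans this) (not_le.2 (ENNReal.half_lt_self hα'0.ne' hα't))
  · exact hnT

lemma greedy_inf_ge (n : ℕ)
    (hbr : ∃ t ∈ Set.Ioc (greedyPoints (fun a b => pVar p x a b) α' T n) T,
      α' ≤ pVar p x (greedyPoints (fun a b => pVar p x a b) α' T n) t) :
    ∀ r, greedyPoints (fun a b => pVar p x a b) α' T (n + 1) < r → r ≤ T →
      α' ≤ pVar p x (greedyPoints (fun a b => pVar p x a b) α' T n) r := by
  intro r h1 h2
  rw [greedyPoints, if_pos hbr] at h1
  obtain ⟨s', hs'S, hs'r⟩ := exists_lt_of_csInf_lt hbr h1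
  calc α' ≤ pVar p x _ s' := hs'S.2
    _ ≤ pVar p x _ r := pVar_mono le_rfl hs'S.1.1.le hs'r.le

lemma greedy_ge (hp : 1 ≤ p) (hα'0 : 0 < α') (hα't : α' ≠ ∞)
    (hx : ContinuousOn x (Set.Icc 0 T)) (hfin : pVar p x 0 T ≠ ∞) (n : ℕ)
    (hbr : ∃ t ∈ Set.Ioc (greedyPoints (fun a b => pVar p x a b) α' T n) T,
      α' ≤ pVar p x (greedyPoints (fun a b => pVar p x a b) α' T n) t)
    (h0n : 0 ≤ greedyPoints (fun a b => pVar p x a b) α' T n)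
    (hmono : greedyPoints (fun a b => pVar p x a b) α' T n
      ≤ greedyPoints (fun a b => pVar p x a b) α' T (n + 1))
    (hlt : greedyPoints (fun a b => pVar p x a b) α' T (n + 1) < T) :
    α' ≤ pVar p x (greedyPoints (fun a b => pVar p x a b) α' T n)
      (greedyPoints (fun a b => pVar p x a b) α' T (n + 1)) := by
  have hp0 : (0:ℝ) < p := by linarith
  set σn := greedyPoints (fun a b => pVar p x a b) α' T n with hσn
  set σ' := greedyPoints (fun a b => pVar p x a b) α' T (n + 1) with hσ'
  have hσ'0 : 0 ≤ σ' := h0n.trans hmono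
  have hge := greedy_inf_ge n hbr
  refine le_of_forall_rpow_mul_le hp0 fun c hc hc' => ?_
  refine ENNReal.le_of_forall_pos_le_add fun η hη hfin2 => ?_
  set d : ℝ≥0∞ := 1 + (c - 1)⁻¹ with hd
  have hc1 : c - 1 ≠ 0 := by
    simp only [ne_eq, tsub_eq_zero_iff_le, not_le]; exact hc
  have hdt : d ≠ ∞ := by
    rw [hd]
    exact ENNReal.add_ne_top.2 ⟨by norm_num, ENNReal.inv_ne_top.2 hc1⟩
  have hdpt : d ^ p + 1 ≠ ∞ :=
    ENNReal.add_ne_top.2 ⟨ENNReal.rpow_ne_top_of_nonneg hp0.le hdt, by norm_num⟩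
  have hdp0 : d ^ p + 1 ≠ 0 := by
    simp
  set ε := (η : ℝ≥0∞) / (d ^ p + 1) with hε
  have hε0 : 0 < ε := ENNReal.div_pos (by exact_mod_cast hη.ne') hdpt
  obtain ⟨t₁, ht₁1, ht₁2, ht₁3⟩ := exists_right_small hp0 hx hfin hσ'0 hlt hε0
  obtain ⟨δ, hδ0, hδ⟩ := edist_small hp0 hx (Set.mem_Icc.2 ⟨hσ'0, hlt.le⟩) hε0
  set r := min t₁ (min (σ' + δ / 2) T) with hr
  have hrgt : σ' < r := lt_min ht₁1 (lt_min (by linarith) hlt)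
  have hrT : r ≤ T := (min_le_right _ _).trans (min_le_right _ _)
  have hb : ∀ v, σ' ≤ v → v ≤ r → edist (x σ') (x v) ^ p ≤ ε := by
    intro v hv1 hv2
    rw [edist_comm]
    refine (hδ v (Set.mem_Icc.2 ⟨hσ'0.trans hv1, hv2.trans hrT⟩) ?_).le
    rw [abs_sub_lt_iff]
    have hvr : v ≤ σ' + δ / 2 := hv2.trans ((min_le_right _ _).trans (min_le_left _ _))
    constructor <;> linarith
  have hsplit := pVar_split_le hp hmono hrgt.le hc hc' hb
  have hωr : pVar p x σ' r ≤ ε :=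
    (pVar_mono le_rfl hrgt.le (min_le_left _ _)).trans ht₁3
  calc α' ≤ pVar p x σn r := hge r hrgt hrT
    _ ≤ c ^ p * pVar p x σn σ' + d ^ p * ε + pVar p x σ' r := hsplit
    _ ≤ c ^ p * pVar p x σn σ' + d ^ p * ε + 1 * ε := by
        rw [one_mul]
        exact add_le_add_right hωr _
    _ = c ^ p * pVar p x σn σ' + (d ^ p + 1) * ε := by
        rw [add_assoc, add_mul]
    _ = c ^ p * pVar p x σn σ' + (η : ℝ≥0∞) := by
        rw [hε, ENNReal.mul_div_cancel' (fun h => absurd h hdp0) (fun h => absurd h hdpt)]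

lemma greedy_terminates (hp : 1 ≤ p) (hα'0 : 0 < α') (hα't : α' ≠ ∞) (hT : 0 ≤ T)
    (hx : ContinuousOn x (Set.Icc 0 T)) (hfin : pVar p x 0 T ≠ ∞) :
    ∃ N, greedyPoints (fun a b => pVar p x a b) α' T N = T := by
  by_contra hcon
  push_neg at hcon
  have hp0 : (0:ℝ) < p := by linarith
  set σ := greedyPoints (fun a b => pVar p x a b) α' T with hσ
  have hbnd := greedy_bounds (p := p) (x := x) (α' := α') hT
  have hlt : ∀ n, σ n < T := fun n => lt_of_le_of_ne (hbnd n).2.1 (hcon n)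
  have hpos : ∀ n, ∃ t ∈ Set.Ioc (σ n) T, α' ≤ pVar p x (σ n) t := by
    intro n
    by_contra hbr
    have : σ (n + 1) = T := by rw [hσ, greedyPoints, if_neg hbr]
    exact hcon (n + 1) this
  have hstrict : ∀ n, σ n < σ (n + 1) := fun n =>
    greedy_strict hp hα'0 hα't hx hfin n (hbnd n).1 (hlt n)
  have hge2 : ∀ n, α' ≤ pVar p x (σ n) (σ (n + 2)) := fun n =>
    greedy_inf_ge n (hpos n) (σ (n + 2)) (hstrict (n + 1)) (hbnd (n + 2)).2.1
  have hK : ∀ K : ℕ, (K : ℝ≥0∞) * α' ≤ pVar p x 0 T := by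
    intro K
    set c : ℕ → ℝ := fun k => σ (2 * k) with hc
    have hcmono : ∀ j < K, c j ≤ c (j + 1) := by
      intro j hj
      rw [hc]
      simp only
      rw [show 2 * (j + 1) = 2 * j + 1 + 1 by omega]
      exact ((hstrict (2 * j)).trans (hstrict (2 * j + 1))).le
    have hterm : ∀ j ∈ Finset.range K, α' ≤ pVar p x (c j) (c (j + 1)) := by
      intro j hj
      rw [hc]
      simp only
      rw [show 2 * (j + 1) = 2 * j + 2 by omega]
      exact hge2 (2 * j)
    calc (K : ℝ≥0∞) * α' = K • α' := by rw [nsmul_eq_mul]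
      _ ≤ ∑ j ∈ Finset.range K, pVar p x (c j) (c (j + 1)) := by
          simpa using Finset.card_nsmul_le_sum (Finset.range K) _ _ hterm
      _ ≤ pVar p x (c 0) (c K) := sum_pVar_chain hcmono
      _ ≤ pVar p x 0 T := by
          have hc0 : c 0 = σ 0 := by rw [hc]
          have hσ0 : σ 0 = 0 := by rw [hσ]; rfl
          refine pVar_mono ?_ ?_ (hbnd (2 * K)).2.1
          · rw [hc0, hσ0]
          · rw [hc0, hσ0]; exact (hbnd (2 * K)).1
  obtain ⟨K, hK'⟩ := ENNReal.exists_nat_gt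
    (show pVar p x 0 T / α' ≠ ∞ from (ENNReal.div_lt_top hfin hα'0.ne').ne)
  have := hK K
  rw [← ENNReal.le_div_iff_mul_le (Or.inl hα'0.ne') (Or.inl hα't)] at this
  exact absurd (this.trans_lt hK') (lt_irrefl _)

end Greedy

end PVarProof

open PVarProof in
theorem pVar_le_accumLocalVar_bound {E : Type*} [MetricSpace E] (p α T : ℝ)
    (hp : 1 ≤ p) (hα : 0 < α) (hT : 0 ≤ T) (x : ℝ → E)
    (hx : ContinuousOn x (Set.Icc 0 T)) (hfin : pVar p x 0 T < ∞) :
    pVar p x 0 T ≤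
      (2 : ℝ≥0∞) ^ (p - 1) * ENNReal.ofReal α *
        max 1 ((ENNReal.ofReal α) ^ (-p) *
          accumLocalVar (fun s t => pVar p x s t) (ENNReal.ofReal α) T ^ p) := by
  classical
  set α' := ENNReal.ofReal α with hα'
  have hα'0 : 0 < α' := ENNReal.ofReal_pos.2 hα
  have hα't : α' ≠ ∞ := ENNReal.ofReal_ne_top
  have hp0 : (0:ℝ) < p := by linarith
  set M := accumLocalVar (fun s t => pVar p x s t) α' T with hM
  have h2p1 : (1:ℝ≥0∞) ≤ 2 ^ (p - 1) := by
    calc (1:ℝ≥0∞) = 2 ^ (0:ℝ) := by rw [ENNReal.rpow_zero]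
      _ ≤ 2 ^ (p - 1) := ENNReal.rpow_le_rpow_of_exponent_le (by norm_num) (by linarith)
  by_cases hMtop : M = ∞
  · have hRHS : (2:ℝ≥0∞) ^ (p - 1) * α' * max 1 (α' ^ (-p) * M ^ p) = ∞ := by
      rw [hMtop, ENNReal.top_rpow_of_pos hp0,
        ENNReal.mul_top (ENNReal.rpow_pos hα'0 hα't).ne',
        max_eq_right (le_top : (1:ℝ≥0∞) ≤ ⊤),
        ENNReal.mul_top (mul_ne_zero (by positivity) hα'0.ne')]
    rw [hRHS]
    exact le_top
  rcases eq_or_lt_of_le hT with hT0 | hTpos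
  · have h0 : pVar p x 0 T = 0 := by rw [← hT0, pVar_self]
    rw [h0]
    exact zero_le
  have hfin' : pVar p x 0 T ≠ ∞ := hfin.ne
  obtain ⟨N₀, hN₀⟩ := greedy_terminates hp hα'0 hα't hT hx hfin'
  set σg := greedyPoints (fun a b => pVar p x a b) α' T with hσg
  have hex : ∃ N, σg N = T := ⟨N₀, hN₀⟩
  set N := Nat.find hex with hN
  have hNT : σg N = T := Nat.find_spec hex
  have hmin : ∀ k < N, σg k ≠ T := fun k hk => Nat.find_min hex hk
  have hbnd := greedy_bounds (p := p) (x := x) (α' := α') hT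
  have hN0 : N ≠ 0 := by
    intro h
    rw [h] at hNT
    have h00 : σg 0 = 0 := rfl
    rw [h00] at hNT
    exact absurd hNT hTpos.ne
  have hklt : ∀ k < N, σg k < T := fun k hk => lt_of_le_of_ne (hbnd k).2.1 (hmin k hk)
  have hgmono : ∀ k < N, σg k ≤ σg (k + 1) := fun k _ => (hbnd k).2.2
  have hωk_le : ∀ k < N, pVar p x (σg k) (σg (k + 1)) ≤ α' := fun k hk =>
    greedy_le hp hα'0 hα't hx k (hbnd k).1 (hbnd k).2.1
  set S := ∑ k ∈ Finset.range N, pVar p x (σg k) (σg (k + 1)) with hSdef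
  have hgrid : pVar p x 0 T ≤ (N : ℝ≥0∞) ^ (p - 1) * S :=
    pVar_le_grid hp hN0 hgmono rfl hNT
  have hstep : ∀ k < N, σg k < σg (k + 1) := fun k hk =>
    greedy_strict hp hα'0 hα't hx hfin' k (hbnd k).1 (hklt k hk)
  have hS_M : S ≤ M := by
    rw [hM, accumLocalVar]
    have key : ∀ b, ∀ a, a < b → b ≤ N → σg a < σg b := by
      intro b
      induction b with
      | zero => intro a ha _; omega
      | succ l ih =>
        intro a ha hbN
        rcases Nat.lt_succ_iff_lt_or_eq.1 ha with h | h
        · exact (ih a h (by omega)).trans (hstep l (by omega))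
        · rw [h]
          exact hstep l (by omega)
    have hsm : StrictMono (fun i : Fin (N + 1) => σg i.val) := by
      intro i j hij
      exact key j.val i.val (Fin.lt_iff_val_lt_val.1 hij) (Nat.lt_succ_iff.1 j.isLt)
    refine le_iSup_of_le N (le_iSup_of_le (fun i : Fin (N + 1) => σg i.val)
      (le_iSup_of_le hsm (le_iSup_of_le rfl (le_iSup_of_le hNT (le_iSup_of_le ?_ ?_)))))
    · intro i
      exact hωk_le i.val i.isLt
    · rw [hSdef, ← Fin.sum_univ_eq_sum_range]
      exact le_rfl
  rcases eq_or_lt_of_le (Nat.one_le_iff_ne_zero.2 hN0) with hN1 | hN2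
  · -- N = 1
    have hS1 : S ≤ α' := by
      rw [hSdef, ← hN1, Finset.sum_range_one]
      exact hωk_le 0 (by omega)
    have hmain : pVar p x 0 T ≤ α' := by
      refine hgrid.trans ?_
      rw [← hN1]
      rw [Nat.cast_one, ENNReal.one_rpow, one_mul]
      exact hS1
    calc pVar p x 0 T ≤ α' := hmain
      _ = 1 * α' * 1 := by ring
      _ ≤ 2 ^ (p - 1) * α' * max 1 (α' ^ (-p) * M ^ p) :=
          mul_le_mul' (mul_le_mul' h2p1 le_rfl) (le_max_left _ _)
  · -- N ≥ 2
    have hωk_ge : ∀ k, k + 2 ≤ N → α' ≤ pVar p x (σg k) (σg (k + 1)) := by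
      intro k hk
      have hk1 : σg (k + 1) < T := hklt (k + 1) (by omega)
      have hbr : ∃ t ∈ Set.Ioc (σg k) T, α' ≤ pVar p x (σg k) t := by
        by_contra hbr
        have : σg (k + 1) = T := by rw [hσg, greedyPoints, if_neg hbr]
        exact absurd this hk1.ne
      exact greedy_ge hp hα'0 hα't hx hfin' k hbr (hbnd k).1 (hbnd k).2.2 hk1
    have hlow : ((N - 1 : ℕ) : ℝ≥0∞) * α' ≤ S := by
      calc ((N - 1 : ℕ) : ℝ≥0∞) * α' = (N - 1 : ℕ) • α' := (nsmul_eq_mul _ _).symm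
        _ ≤ ∑ k ∈ Finset.range (N - 1), pVar p x (σg k) (σg (k + 1)) := by
            simpa using Finset.card_nsmul_le_sum (Finset.range (N - 1)) _ _
              (fun k hk => hωk_ge k (by have := Finset.mem_range.1 hk; omega))
        _ ≤ S := by
            rw [hSdef]
            exact Finset.sum_le_sum_of_subset (Finset.range_subset_range.2 (by omega))
    have hM0 : M ≠ 0 := by
      intro h
      have h1 : (1:ℝ≥0∞) ≤ ((N - 1 : ℕ) : ℝ≥0∞) := by
        have : (1:ℕ) ≤ N - 1 := by omega
        exact_mod_cast Nat.cast_le.2 this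
      have : α' ≤ M := by
        calc α' = 1 * α' := (one_mul _).symm
          _ ≤ ((N - 1 : ℕ) : ℝ≥0∞) * α' := mul_le_mul_left h1 _
          _ ≤ S := hlow
          _ ≤ M := hS_M
      rw [h] at this
      exact absurd this (not_le.2 hα'0)
    have hNle : (N : ℝ≥0∞) ≤ 2 * M * α'⁻¹ := by
      have h1 : (N : ℝ≥0∞) * α' ≤ 2 * M := by
        calc (N : ℝ≥0∞) * α' ≤ (2 * ((N - 1 : ℕ) : ℝ≥0∞)) * α' := by
              refine mul_le_mul_left ?_ _
              have hnat : N ≤ 2 * (N - 1) := by omega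
              calc (N : ℝ≥0∞) ≤ ((2 * (N - 1) : ℕ) : ℝ≥0∞) := Nat.cast_le.2 hnat
                _ = 2 * ((N - 1 : ℕ) : ℝ≥0∞) := by push_cast; ring
          _ = 2 * (((N - 1 : ℕ) : ℝ≥0∞) * α') := by ring
          _ ≤ 2 * M := mul_le_mul_right (hlow.trans hS_M) _
      calc (N : ℝ≥0∞) = (N : ℝ≥0∞) * α' * α'⁻¹ := by
            rw [mul_assoc, ENNReal.mul_inv_cancel hα'0.ne' hα't, mul_one]
        _ ≤ 2 * M * α'⁻¹ := mul_le_mul_left h1 _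
    have hfinal : (N : ℝ≥0∞) ^ (p - 1) * S ≤ 2 ^ (p - 1) * α' * (α' ^ (-p) * M ^ p) := by
      have hrp : (N : ℝ≥0∞) ^ (p - 1) ≤ (2 * M * α'⁻¹) ^ (p - 1) :=
        ENNReal.rpow_le_rpow hNle (by linarith)
      have hexp : ((2 * M * α'⁻¹ : ℝ≥0∞)) ^ (p - 1)
          = 2 ^ (p - 1) * M ^ (p - 1) * (α'⁻¹) ^ (p - 1) := by
        rw [ENNReal.mul_rpow_of_nonneg _ _ (by linarith : (0:ℝ) ≤ p - 1),
          ENNReal.mul_rpow_of_nonneg _ _ (by linarith : (0:ℝ) ≤ p - 1)]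
      have e1 : α' ^ (1:ℝ) * α' ^ (-p) = (α'⁻¹) ^ (p - 1) := by
        rw [← ENNReal.rpow_add _ _ hα'0.ne' hα't, ENNReal.inv_rpow, ← ENNReal.rpow_neg]
        congr 1
        ring
      have e2 : M ^ (p - 1) * M ^ (1:ℝ) = M ^ p := by
        rw [← ENNReal.rpow_add _ _ hM0 hMtop]
        norm_num
      calc (N : ℝ≥0∞) ^ (p - 1) * S ≤ (2 * M * α'⁻¹) ^ (p - 1) * M := mul_le_mul' hrp hS_M
        _ = 2 ^ (p - 1) * (α'⁻¹) ^ (p - 1) * (M ^ (p - 1) * M ^ (1:ℝ)) := by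
            rw [hexp, ENNReal.rpow_one]; ring
        _ = 2 ^ (p - 1) * (α' ^ (1:ℝ) * α' ^ (-p)) * M ^ p := by rw [e1, e2]
        _ = 2 ^ (p - 1) * α' * (α' ^ (-p) * M ^ p) := by rw [ENNReal.rpow_one]; ring
    calc pVar p x 0 T ≤ (N : ℝ≥0∞) ^ (p - 1) * S := hgrid
      _ ≤ 2 ^ (p - 1) * α' * (α' ^ (-p) * M ^ p) := hfinal
      _ ≤ 2 ^ (p - 1) * α' * max 1 (α' ^ (-p) * M ^ p) :=
          mul_le_mul_right (le_max_right _ _) _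
end

section
/- Let p ≥ 1 and α > 0, let (E,d) be a metric space and let x : [0,T] → E be a continuous path with ν_p(x; 0,T) < ∞; set ω_x(s,t) := ν_p(x; s,t). Then for every partition 0 = t₀ < t₁ < … < t_n = T, Σ_{i=1}^n d(x_{t_{i−1}}, x_{t_i})^p ≤ (N_{α,[0,T]}(ω_x) + 1)^{p−1} · M_{α,[0,T]}(ω_x), with the convention that the right-hand side is +∞ when N_{α,[0,T]}(ω_x) is infinite or M_{α,[0,T]}(ω_x) = ∞. -/
open scoped ENNReal

namespace List

theorem chain'_cons {α : Type*} {R : α → α → Prop} {x y : α} {l : List α} :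
    List.Chain' R (x :: y :: l) ↔ R x y ∧ List.Chain' R (y :: l) := List.isChain_cons_cons

theorem chain'_iff_pairwise {α : Type*} {R : α → α → Prop} [Trans R R R] {l : List α} :
    List.Chain' R l ↔ List.Pairwise R l := List.isChain_iff_pairwise

theorem chain'_iff_get {α : Type*} {R : α → α → Prop} {l : List α} :
    List.Chain' R l ↔ ∀ (i : ℕ) (h : i < l.length - 1),
      R (l.get ⟨i, by omega⟩) (l.get ⟨i + 1, by omega⟩) := by
  show List.IsChain R l ↔ _
  rw [List.isChain_iff_getElem]
  constructor
  · intro h i hi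
    exact h i (by omega)
  · intro h i hi
    exact h i (by omega)

theorem chain'_append {α : Type*} {R : α → α → Prop} {l₁ l₂ : List α} :
    List.Chain' R (l₁ ++ l₂) ↔ List.Chain' R l₁ ∧ List.Chain' R l₂ ∧
      ∀ x ∈ l₁.getLast?, ∀ y ∈ l₂.head?, R x y := List.isChain_append

theorem chain'_singleton {α : Type*} {R : α → α → Prop} (a : α) : List.Chain' R [a] :=
  List.IsChain.singleton a

theorem chain'_cons' {α : Type*} {R : α → α → Prop} {x : α} {l : List α} :
    List.Chain' R (x :: l) ↔ (∀ y ∈ l.head?, R x y) ∧ List.Chain' R l := List.isChain_cons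

theorem Chain'.imp {α : Type*} {R S : α → α → Prop} (H : ∀ a b, R a b → S a b) {l : List α}
    (p : List.Chain' R l) : List.Chain' S l := List.IsChain.imp (fun a b => H a b) p

end List

namespace PvarAux

open scoped Classical

/-- Sum of `f` over consecutive pairs of a list. -/
noncomputable def pairSum (f : ℝ → ℝ → ℝ≥0∞) : List ℝ → ℝ≥0∞
  | a :: b :: l => f a b + pairSum f (b :: l)
  | _ => 0

@[simp] lemma pairSum_nil (f : ℝ → ℝ → ℝ≥0∞) : pairSum f [] = 0 := rfl
@[simp] lemma pairSum_single (f : ℝ → ℝ → ℝ≥0∞) (a : ℝ) : pairSum f [a] = 0 := rfl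
@[simp] lemma pairSum_cons_cons (f : ℝ → ℝ → ℝ≥0∞) (a b : ℝ) (l : List ℝ) :
    pairSum f (a :: b :: l) = f a b + pairSum f (b :: l) := rfl

lemma pairSum_concat (f : ℝ → ℝ → ℝ≥0∞) (l₁ : List ℝ) (b : ℝ) (l₂ : List ℝ) :
    pairSum f (l₁ ++ b :: l₂) = pairSum f (l₁ ++ [b]) + pairSum f (b :: l₂) := by
  induction l₁ with
  | nil => simp
  | cons a l₁ ih =>
    cases l₁ with
    | nil => simp [pairSum]
    | cons c l₁ => simp only [List.cons_append, pairSum_cons_cons] at ih ⊢; rw [ih, add_assoc]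

lemma pairSum_append_pair (f : ℝ → ℝ → ℝ≥0∞) (l : List ℝ) (b c : ℝ) :
    pairSum f (l ++ [b, c]) = pairSum f (l ++ [b]) + f b c := by
  have h := pairSum_concat f l b [c]
  simpa using h

lemma pairSum_le_pairSum {f g : ℝ → ℝ → ℝ≥0∞} : ∀ {l : List ℝ},
    l.Chain' (fun a b => f a b ≤ g a b) → pairSum f l ≤ pairSum g l
  | [], _ => le_rfl
  | [_], _ => le_rfl
  | a :: b :: l, h => by
    rw [List.chain'_cons] at h
    exact add_le_add h.1 (pairSum_le_pairSum h.2)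

lemma edist_head_getLast_le {E : Type*} [PseudoMetricSpace E] (x : ℝ → E) :
    ∀ (l : List ℝ) (hne : l ≠ []),
      edist (x (l.head hne)) (x (l.getLast hne)) ≤
        pairSum (fun a b => edist (x a) (x b)) l
  | [], hne => absurd rfl hne
  | [a], _ => by simp
  | a :: b :: l, _ => by
    calc edist (x a) (x ((a :: b :: l).getLast (by simp)))
        ≤ edist (x a) (x b) + edist (x b) (x ((b :: l).getLast (by simp))) := by
          rw [List.getLast_cons (by simp)]
          exact edist_triangle _ _ _
      _ ≤ _ := add_le_add_right (edist_head_getLast_le x (b :: l) (by simp)) _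

lemma pairSum_eq_sum_fin (f : ℝ → ℝ → ℝ≥0∞) : ∀ (a : ℝ) (t : List ℝ),
    pairSum f (a :: t) =
      ∑ i : Fin t.length, f ((a :: t).get i.castSucc) ((a :: t).get i.succ)
  | a, [] => by simp
  | a, b :: t => by
    show pairSum f (a :: b :: t) =
      ∑ i : Fin (t.length + 1), f ((a :: b :: t).get i.castSucc) ((a :: b :: t).get i.succ)
    rw [Fin.sum_univ_succ, pairSum_cons_cons, pairSum_eq_sum_fin f b t]
    rfl

/-- From a list partition, get a `Fin`-indexed partition. -/
lemma exists_fin_of_list {l : List ℝ} (hc : l.Chain' (· < ·)) {s t : ℝ}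
    (hh : l.head? = some s) (hl : l.getLast? = some t) :
    ∃ (n : ℕ) (u : Fin (n + 1) → ℝ), StrictMono u ∧ u 0 = s ∧ u (Fin.last n) = t ∧
      (∀ f : ℝ → ℝ → ℝ≥0∞, ∑ i : Fin n, f (u i.castSucc) (u i.succ) = pairSum f l) ∧
      (∀ R : ℝ → ℝ → Prop, l.Chain' R → ∀ i : Fin n, R (u i.castSucc) (u i.succ)) := by
  obtain ⟨a, t', rfl⟩ : ∃ a t', l = a :: t' := by
    cases l with
    | nil => simp at hh
    | cons a t' => exact ⟨a, t', rfl⟩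
  have ha : a = s := by simpa using hh
  subst ha
  refine ⟨t'.length, (a :: t').get, ?_, rfl, ?_, fun f => (pairSum_eq_sum_fin f a t').symm, ?_⟩
  · intro i j hij
    exact List.pairwise_iff_get.mp (List.chain'_iff_pairwise.mp hc) i j hij
  · have hne : (a :: t') ≠ [] := by simp
    have h2 := List.getLast?_eq_getLast_of_ne_nil hne
    rw [h2] at hl
    rw [← Option.some_inj.mp hl, List.getLast_eq_getElem]
    rfl
  · intro R hR i
    exact List.chain'_iff_get.mp hR i i.isLt

lemma pairSum_eq_get (f : ℝ → ℝ → ℝ≥0∞) (l : List ℝ) (m : ℕ) (hm : l.length = m + 1) :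
    pairSum f l = ∑ i : Fin m,
      f (l.get (Fin.cast hm.symm i.castSucc)) (l.get (Fin.cast hm.symm i.succ)) := by
  cases l with
  | nil => simp at hm
  | cons a t =>
    obtain rfl : m = t.length := by simpa using hm.symm
    exact pairSum_eq_sum_fin f a t

lemma sum_fin_eq_pairSum_ofFn (f : ℝ → ℝ → ℝ≥0∞) (n : ℕ) (u : Fin (n + 1) → ℝ) :
    ∑ i : Fin n, f (u i.castSucc) (u i.succ) = pairSum f (List.ofFn u) := by
  rw [pairSum_eq_get f (List.ofFn u) n (by simp)]
  apply Finset.sum_congr rfl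
  intro i _
  rw [List.get_ofFn, List.get_ofFn]
  rfl

lemma chain'_lt_ofFn {n : ℕ} {u : Fin (n + 1) → ℝ} (hu : StrictMono u) :
    (List.ofFn u).Chain' (· < ·) := by
  rw [List.chain'_iff_pairwise, List.pairwise_iff_get]
  intro i j hij
  rw [List.get_ofFn, List.get_ofFn]
  apply hu
  rw [Fin.lt_def] at hij ⊢
  exact hij

lemma head?_ofFn {n : ℕ} (u : Fin (n + 1) → ℝ) : (List.ofFn u).head? = some (u 0) := by
  rw [List.ofFn_succ]; rfl

lemma getLast?_ofFn {n : ℕ} (u : Fin (n + 1) → ℝ) :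
    (List.ofFn u).getLast? = some (u (Fin.last n)) := by
  have hne : List.ofFn u ≠ [] := by simp [← List.length_pos_iff, List.length_ofFn]
  rw [List.getLast?_eq_getLast_of_ne_nil hne, List.getLast_eq_getElem]
  rw [List.getElem_ofFn]
  exact congrArg (fun i => some (u i)) (Fin.ext (by simp))


section PVarLemmas

variable {E : Type*} [PseudoMetricSpace E] (p : ℝ) (x : ℝ → E)

lemma le_pVar {s t : ℝ} {l : List ℝ} (hc : l.Chain' (· < ·))
    (hh : l.head? = some s) (hl : l.getLast? = some t) :
    pairSum (fun a b => edist (x a) (x b) ^ p) l ≤ pVar p x s t := by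
  obtain ⟨n, u, hu, h0, hlast, hsum, -⟩ := exists_fin_of_list hc hh hl
  rw [← hsum]
  exact le_iSup_of_le n (le_iSup_of_le u (le_iSup_of_le hu
    (le_iSup_of_le h0 (le_iSup_of_le hlast le_rfl))))

lemma le_accum (ω : ℝ → ℝ → ℝ≥0∞) (αe : ℝ≥0∞) (T : ℝ) {l : List ℝ}
    (hc : l.Chain' (· < ·)) (hh : l.head? = some 0) (hl : l.getLast? = some T)
    (hadm : l.Chain' (fun a b => ω a b ≤ αe)) :
    pairSum ω l ≤ accumLocalVar ω αe T := by
  obtain ⟨n, u, hu, h0, hlast, hsum, hchain⟩ := exists_fin_of_list hc hh hl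
  rw [← hsum]
  exact le_iSup_of_le n (le_iSup_of_le u (le_iSup_of_le hu (le_iSup_of_le h0
    (le_iSup_of_le hlast (le_iSup_of_le (hchain _ hadm) le_rfl)))))

lemma pVar_le {s t : ℝ} {c : ℝ≥0∞}
    (h : ∀ l : List ℝ, l.Chain' (· < ·) → l.head? = some s → l.getLast? = some t →
      pairSum (fun a b => edist (x a) (x b) ^ p) l ≤ c) :
    pVar p x s t ≤ c := by
  refine iSup_le fun n => iSup_le fun u => iSup_le fun hu => iSup_le fun h0 =>
    iSup_le fun hlast => ?_
  rw [sum_fin_eq_pairSum_ofFn (fun a b => edist (x a) (x b) ^ p) n u]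
  exact h _ (chain'_lt_ofFn hu) (by rw [head?_ofFn, h0]) (by rw [getLast?_ofFn, hlast])

lemma edist_le_pVar {s t : ℝ} (h : s < t) :
    edist (x s) (x t) ^ p ≤ pVar p x s t := by
  have := le_pVar p x (l := [s, t]) (by simp [List.Chain', h]) rfl rfl
  simpa using this

/-- Extension of a partition to a larger interval. -/
lemma extend_list {s t s' t' : ℝ} {l : List ℝ} (hc : l.Chain' (· < ·))
    (hh : l.head? = some s) (hl : l.getLast? = some t)
    (hss : s' ≤ s) (htt : t ≤ t') :
    ∃ l' : List ℝ, l'.Chain' (· < ·) ∧ l'.head? = some s' ∧ l'.getLast? = some t' ∧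
      ∀ f : ℝ → ℝ → ℝ≥0∞, pairSum f l ≤ pairSum f l' := by
  obtain ⟨rest, rfl⟩ : ∃ rest, l = s :: rest := by
    cases l with
    | nil => simp at hh
    | cons a r => exact ⟨r, by rw [show a = s by simpa using hh]⟩
  -- first extend on the right
  obtain ⟨l₁, h1c, h1h, h1l, h1sum⟩ :
      ∃ l₁ : List ℝ, l₁.Chain' (· < ·) ∧ l₁.head? = some s ∧ l₁.getLast? = some t' ∧
        ∀ f : ℝ → ℝ → ℝ≥0∞, pairSum f (s :: rest) ≤ pairSum f l₁ := by
    rcases eq_or_lt_of_le htt with rfl | ht'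
    · exact ⟨s :: rest, hc, rfl, hl, fun f => le_rfl⟩
    · refine ⟨(s :: rest) ++ [t'], ?_, rfl, List.getLast?_concat, ?_⟩
      · refine List.chain'_append.2 ⟨hc, List.chain'_singleton _, ?_⟩
        intro a ha b hb
        rw [hl] at ha
        simp only [Option.mem_def, Option.some_inj] at ha
        simp only [List.head?_cons, Option.mem_def, Option.some_inj] at hb
        cases ha
        cases hb
        exact ht'
      · intro f
        have hd := List.dropLast_append_getLast? t hl
        have h2 : (s :: rest) ++ [t'] = (s :: rest).dropLast ++ [t, t'] := by
          rw [← hd]; simp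
        rw [h2, pairSum_append_pair, hd]
        exact le_self_add
  -- then extend on the left
  rcases eq_or_lt_of_le hss with rfl | hs'
  · exact ⟨l₁, h1c, h1h, h1l, h1sum⟩
  · obtain ⟨rest₁, rfl⟩ : ∃ r₁, l₁ = s :: r₁ := by
      cases l₁ with
      | nil => simp at h1h
      | cons a r => exact ⟨r, by rw [show a = s by simpa using h1h]⟩
    refine ⟨s' :: s :: rest₁, ?_, rfl, ?_, ?_⟩
    · exact List.chain'_cons.2 ⟨hs', h1c⟩
    · rw [List.getLast?_cons_cons]
      exact h1l
    · intro f
      calc pairSum f (s :: rest) ≤ pairSum f (s :: rest₁) := h1sum f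
        _ ≤ f s' s + pairSum f (s :: rest₁) := le_add_self
        _ = pairSum f (s' :: s :: rest₁) := rfl

lemma pVar_mono {s t s' t' : ℝ} (hss : s' ≤ s) (htt : t ≤ t') :
    pVar p x s t ≤ pVar p x s' t' := by
  apply pVar_le
  intro l hc hh hl
  obtain ⟨l', h'c, h'h, h'l, h'sum⟩ := extend_list hc hh hl hss htt
  exact (h'sum _).trans (le_pVar p x h'c h'h h'l)

/-- Left-continuity style bound: if `pVar` is bounded by `c` on all
strict subintervals `[s, r]`, `r < t`, then it is bounded by `c` on `[s, t]`. -/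
lemma pVar_le_of_forall_lt {T s t : ℝ} (hx : ContinuousOn x (Set.Icc 0 T))
    (hs : 0 ≤ s) (hst : s < t) (htT : t ≤ T) {c : ℝ≥0∞}
    (hr : ∀ r, s < r → r < t → pVar p x s r ≤ c) :
    pVar p x s t ≤ c := by
  apply pVar_le
  intro l hc hh hl
  set f := fun a b => edist (x a) (x b) ^ p with hf
  obtain ⟨rest, rfl⟩ : ∃ rest, l = s :: rest := by
    cases l with
    | nil => simp at hh
    | cons a r => exact ⟨r, by rw [show a = s by simpa using hh]⟩
  rcases List.eq_nil_or_concat rest with rfl | ⟨r₂, b, rfl⟩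
  · simp only [List.getLast?_singleton, Option.some_inj] at hl
    exact absurd hl (ne_of_lt hst)
  simp only [List.concat_eq_append] at hc hh hl ⊢
  have hb : (s :: (r₂ ++ [b])).getLast? = some b := by
    rw [show s :: (r₂ ++ [b]) = (s :: r₂) ++ [b] from rfl, List.getLast?_concat]
  have hbt : b = t := by rw [hb] at hl; exact Option.some_inj.mp hl
  rw [hbt] at hc hh ⊢
  set l' := s :: r₂ with hl'
  have hll : s :: (r₂ ++ [t]) = l' ++ [t] := by simp [hl']
  rw [hll] at hc ⊢
  have hl'ne : l' ≠ [] := by simp [hl']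
  set c₀ := l'.getLast hl'ne with hc₀
  have hl'last : l'.getLast? = some c₀ := List.getLast?_eq_getLast_of_ne_nil hl'ne
  have hdecomp : l'.dropLast ++ [c₀] = l' := List.dropLast_append_getLast hl'ne
  have hcl' : l'.Chain' (· < ·) := (List.chain'_append.1 hc).1
  have hc₀t : c₀ < t := by
    have := (List.chain'_append.1 hc).2.2
    exact this c₀ (by rw [hl'last]; rfl) t rfl
  have hsc₀ : s ≤ c₀ := by
    have hmem : c₀ ∈ l' := List.getLast_mem hl'ne
    rw [hl'] at hmem
    rcases List.mem_cons.1 hmem with h | h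
    · exact le_of_eq h.symm
    · have hpw := List.chain'_iff_pairwise.mp hcl'
      rw [hl'] at hpw
      exact le_of_lt ((List.pairwise_cons.1 hpw).1 _ h)
  -- the sum as a function of the final point
  set g : ℝ → ℝ≥0∞ := fun r => pairSum f l' + f c₀ r with hg
  have hsum : ∀ r, pairSum f (l' ++ [r]) = g r := by
    intro r
    have h2 : l' ++ [r] = l'.dropLast ++ [c₀, r] := by rw [← hdecomp]; simp
    rw [h2, pairSum_append_pair, hdecomp]
  have hIoosub : Set.Ioo c₀ t ⊆ Set.Icc 0 T :=
    fun r hrr => ⟨hs.trans (hsc₀.trans (le_of_lt hrr.1)), (le_of_lt hrr.2).trans htT⟩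
  have hne : Filter.NeBot (nhdsWithin t (Set.Ioo c₀ t)) := by
    rw [← mem_closure_iff_nhdsWithin_neBot, closure_Ioo (ne_of_lt hc₀t)]
    exact ⟨le_of_lt hc₀t, le_rfl⟩
  have htend : Filter.Tendsto g (nhdsWithin t (Set.Ioo c₀ t)) (nhds (g t)) := by
    apply Filter.Tendsto.const_add
    have hxt : Filter.Tendsto x (nhdsWithin t (Set.Ioo c₀ t)) (nhds (x t)) := by
      have := hx.continuousWithinAt (x := t) ⟨hs.trans (le_of_lt hst), htT⟩
      exact this.mono hIoosub
    have h1 : Filter.Tendsto (fun r => edist (x c₀) (x r))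
        (nhdsWithin t (Set.Ioo c₀ t)) (nhds (edist (x c₀) (x t))) :=
      Filter.Tendsto.edist tendsto_const_nhds hxt
    exact (ENNReal.continuous_rpow_const.tendsto _).comp h1
  have hbound : ∀ᶠ r in nhdsWithin t (Set.Ioo c₀ t), g r ≤ c := by
    filter_upwards [self_mem_nhdsWithin] with r hrmem
    rw [← hsum r]
    have hchain : (l' ++ [r]).Chain' (· < ·) := by
      refine List.chain'_append.2 ⟨hcl', List.chain'_singleton _, ?_⟩
      intro a ha b hb
      rw [hl'last] at ha
      simp only [List.head?_cons, Option.mem_def, Option.some_inj] at ha hb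
      rw [← ha, ← hb]
      exact hrmem.1
    have hhead : (l' ++ [r]).head? = some s := by simp [hl']
    have hlast : (l' ++ [r]).getLast? = some r := List.getLast?_concat
    exact (le_pVar p x hchain hhead hlast).trans
      (hr r (lt_of_le_of_lt hsc₀ hrmem.1) hrmem.2)
  rw [hsum t]
  exact le_of_tendsto htend hbound

end PVarLemmas


section Greedy

variable (ω : ℝ → ℝ → ℝ≥0∞) (αe : ℝ≥0∞) {T : ℝ}

lemma greedy_zero : greedyPoints ω αe T 0 = 0 := rfl

lemma greedy_succ_def (m : ℕ) :
    greedyPoints ω αe T (m + 1) =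
      if ∃ t ∈ Set.Ioc (greedyPoints ω αe T m) T, αe ≤ ω (greedyPoints ω αe T m) t then
        sInf {t | t ∈ Set.Ioc (greedyPoints ω αe T m) T ∧ αe ≤ ω (greedyPoints ω αe T m) t}
      else T := by
  simp only [greedyPoints]

lemma greedy_le_T (hT : 0 ≤ T) : ∀ m, greedyPoints ω αe T m ≤ T := by
  intro m
  cases m with
  | zero => exact hT
  | succ m =>
    rw [greedy_succ_def]
    split_ifs with h
    · obtain ⟨t₀, ht₀, hα⟩ := h
      exact le_trans (csInf_le ⟨greedyPoints ω αe T m, fun y hy => le_of_lt hy.1.1⟩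
        ⟨ht₀, hα⟩) ht₀.2
    · exact le_rfl

lemma greedy_le_succ (hT : 0 ≤ T) (m : ℕ) :
    greedyPoints ω αe T m ≤ greedyPoints ω αe T (m + 1) := by
  rw [greedy_succ_def]
  split_ifs with h
  · obtain ⟨t₀, ht₀, hα⟩ := h
    exact le_csInf ⟨t₀, ht₀, hα⟩ fun y hy => le_of_lt hy.1.1
  · exact greedy_le_T ω αe hT m

lemma greedy_mono (hT : 0 ≤ T) : Monotone (greedyPoints ω αe T) :=
  monotone_nat_of_le_succ (greedy_le_succ ω αe hT)

lemma greedy_nonneg (hT : 0 ≤ T) (m : ℕ) : 0 ≤ greedyPoints ω αe T m :=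
  greedy_mono ω αe hT (Nat.zero_le m)

lemma greedy_not_ge (hT : 0 ≤ T) {m : ℕ} {t : ℝ}
    (h1 : greedyPoints ω αe T m < t) (h2 : t < greedyPoints ω αe T (m + 1)) :
    ¬ αe ≤ ω (greedyPoints ω αe T m) t := by
  intro hcontra
  have htT : t ≤ T := le_of_lt (lt_of_lt_of_le h2 (greedy_le_T ω αe hT (m + 1)))
  rw [greedy_succ_def] at h2
  split_ifs at h2 with h
  · have : t ∈ {r | r ∈ Set.Ioc (greedyPoints ω αe T m) T ∧
        αe ≤ ω (greedyPoints ω αe T m) r} := ⟨⟨h1, htT⟩, hcontra⟩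
    exact absurd (csInf_le ⟨greedyPoints ω αe T m, fun y hy => le_of_lt hy.1.1⟩ this)
      (not_le.2 h2)
  · exact h ⟨t, ⟨h1, htT⟩, hcontra⟩

lemma greedy_congr {j k : ℕ} (h : greedyPoints ω αe T j = greedyPoints ω αe T k) :
    greedyPoints ω αe T (j + 1) = greedyPoints ω αe T (k + 1) := by
  rw [greedy_succ_def, greedy_succ_def, h]

lemma greedy_stall {m : ℕ} (h : greedyPoints ω αe T (m + 1) = greedyPoints ω αe T m) :
    ∀ k, greedyPoints ω αe T (m + k) = greedyPoints ω αe T m := by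
  intro k
  induction k with
  | zero => rfl
  | succ k ih =>
    exact (greedy_congr ω αe ih).trans h

variable (hT0 : 0 < T) (hBdd : BddAbove {m : ℕ | greedyPoints ω αe T m < T})

lemma greedy_sSup_lt (hT0 : 0 < T)
    (hBdd : BddAbove {m : ℕ | greedyPoints ω αe T m < T}) :
    greedyPoints ω αe T (sSup {m : ℕ | greedyPoints ω αe T m < T}) < T :=
  Nat.sSup_mem ⟨0, hT0⟩ hBdd

lemma greedy_top (hT0 : 0 < T)
    (hBdd : BddAbove {m : ℕ | greedyPoints ω αe T m < T}) :
    greedyPoints ω αe T (sSup {m : ℕ | greedyPoints ω αe T m < T} + 1) = T := by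
  set N := sSup {m : ℕ | greedyPoints ω αe T m < T}
  refine le_antisymm (greedy_le_T ω αe (le_of_lt hT0) _) (not_lt.1 fun h => ?_)
  have := le_csSup hBdd (show N + 1 ∈ {m : ℕ | greedyPoints ω αe T m < T} from h)
  omega

lemma greedy_strict (hT0 : 0 < T)
    (hBdd : BddAbove {m : ℕ | greedyPoints ω αe T m < T}) {m : ℕ}
    (hm : m ≤ sSup {m : ℕ | greedyPoints ω αe T m < T}) :
    greedyPoints ω αe T m < greedyPoints ω αe T (m + 1) := by
  set N := sSup {m : ℕ | greedyPoints ω αe T m < T} with hN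
  rcases lt_or_eq_of_le (greedy_le_succ ω αe (le_of_lt hT0) m) with h | h
  · exact h
  · exfalso
    have hmT : greedyPoints ω αe T m < T :=
      lt_of_le_of_lt (greedy_mono ω αe (le_of_lt hT0) hm) (greedy_sSup_lt ω αe hT0 hBdd)
    obtain ⟨b, hb⟩ := hBdd
    have hmem : m + (b + 1) ∈ {m : ℕ | greedyPoints ω αe T m < T} := by
      show greedyPoints ω αe T (m + (b + 1)) < T
      rw [greedy_stall ω αe h.symm (b + 1)]
      exact hmT
    have := hb hmem
    omega

end Greedy


section Cover

variable {E : Type*} [PseudoMetricSpace E] (p : ℝ) (x : ℝ → E) (αe : ℝ≥0∞) {T : ℝ}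

lemma greedy_pair_le (hx : ContinuousOn x (Set.Icc 0 T)) (hT0 : 0 < T)
    (hBdd : BddAbove {m : ℕ | greedyPoints (fun s t => pVar p x s t) αe T m < T}) {m : ℕ}
    (hm : m ≤ sSup {m : ℕ | greedyPoints (fun s t => pVar p x s t) αe T m < T}) :
    pVar p x (greedyPoints (fun s t => pVar p x s t) αe T m)
      (greedyPoints (fun s t => pVar p x s t) αe T (m + 1)) ≤ αe := by
  set ω := fun s t => pVar p x s t with hω
  refine pVar_le_of_forall_lt p x hx (greedy_nonneg ω αe (le_of_lt hT0) m)
    (greedy_strict ω αe hT0 hBdd hm) (greedy_le_T ω αe (le_of_lt hT0) (m + 1)) ?_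
  intro r h1 h2
  exact le_of_not_ge (greedy_not_ge ω αe (le_of_lt hT0) h1 h2)

lemma greedy_cover (hx : ContinuousOn x (Set.Icc 0 T)) (hT0 : 0 < T)
    (hBdd : BddAbove {m : ℕ | greedyPoints (fun s t => pVar p x s t) αe T m < T})
    {c d : ℝ} (hc0 : 0 ≤ c) (hcd : c < d) (hdT : d ≤ T)
    (hfree : ∀ m, m ≤ sSup {m : ℕ | greedyPoints (fun s t => pVar p x s t) αe T m < T} + 1 →
      greedyPoints (fun s t => pVar p x s t) αe T m ∉ Set.Ioo c d) :
    pVar p x c d ≤ αe := by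
  set ω := fun s t => pVar p x s t with hω
  set N := sSup {m : ℕ | greedyPoints ω αe T m < T} with hN
  set TT := (Finset.range (N + 2)).filter (fun m => greedyPoints ω αe T m ≤ c) with hTT
  have h0TT : 0 ∈ TT := by
    rw [hTT]
    simp only [Finset.mem_filter, Finset.mem_range]
    exact ⟨by omega, by rw [greedy_zero]; exact hc0⟩
  have hTTne : TT.Nonempty := ⟨0, h0TT⟩
  set j := TT.max' hTTne with hj
  have hjmem : j ∈ TT := TT.max'_mem hTTne
  rw [hTT, Finset.mem_filter, Finset.mem_range] at hjmem
  have hjc : greedyPoints ω αe T j ≤ c := hjmem.2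
  have hjN : j ≤ N := by
    rcases Nat.lt_or_ge j (N + 1) with h | h
    · omega
    · exfalso
      have hje : j = N + 1 := by omega
      have := greedy_top ω αe hT0 hBdd
      rw [← hN, ← hje] at this
      rw [this] at hjc
      linarith
  have hj1 : c < greedyPoints ω αe T (j + 1) := by
    by_contra hcon
    push_neg at hcon
    have hmem : j + 1 ∈ TT := by
      rw [hTT]
      simp only [Finset.mem_filter, Finset.mem_range]
      exact ⟨by omega, hcon⟩
    have := TT.le_max' _ hmem
    omega
  have hd : d ≤ greedyPoints ω αe T (j + 1) := by
    by_contra hcon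
    push_neg at hcon
    exact hfree (j + 1) (by omega) ⟨hj1, hcon⟩
  calc pVar p x c d ≤ pVar p x (greedyPoints ω αe T j) (greedyPoints ω αe T (j + 1)) :=
        pVar_mono p x hjc hd
    _ ≤ αe := greedy_pair_le p x αe hx hT0 hBdd hjN

end Cover


section Holder

lemma list_rpow_sum_le {p : ℝ} (hp : 1 ≤ p) (L : List ℝ≥0∞) :
    L.sum ^ p ≤ (L.length : ℝ≥0∞) ^ (p - 1) * (L.map (· ^ p)).sum := by
  rcases List.eq_nil_or_concat L with rfl | ⟨L', e, rfl⟩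
  · simp [ENNReal.zero_rpow_of_pos (by linarith : (0:ℝ) < p)]
  set L := L'.concat e
  have hk : L.length ≠ 0 := by simp [L]
  set k := L.length with hkdef
  have hk0 : (k : ℝ≥0∞) ≠ 0 := Nat.cast_ne_zero.2 hk
  have hktop : (k : ℝ≥0∞) ≠ ⊤ := ENNReal.natCast_ne_top k
  have hsum : L.sum = ∑ i : Fin k, L.get i := by
    conv_lhs => rw [← List.ofFn_get L]
    rw [List.sum_ofFn]
  have hmapsum : (L.map (· ^ p)).sum = ∑ i : Fin k, L.get i ^ p := by
    conv_lhs => rw [← List.ofFn_get L]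
    rw [List.map_ofFn, List.sum_ofFn]
    rfl
  have hw : ∑ _i : Fin k, (k : ℝ≥0∞)⁻¹ = 1 := by
    rw [Finset.sum_const, Finset.card_univ, Fintype.card_fin, nsmul_eq_mul]
    exact ENNReal.mul_inv_cancel hk0 hktop
  have key := ENNReal.rpow_arith_mean_le_arith_mean_rpow
    (s := Finset.univ) (w := fun _ : Fin k => (k : ℝ≥0∞)⁻¹)
    (z := fun i => L.get i) hw hp
  have hL : ∑ i : Fin k, (k : ℝ≥0∞)⁻¹ * L.get i = (k : ℝ≥0∞)⁻¹ * ∑ i : Fin k, L.get i := by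
    rw [Finset.mul_sum]
  have hR : ∑ i : Fin k, (k : ℝ≥0∞)⁻¹ * L.get i ^ p
      = (k : ℝ≥0∞)⁻¹ * ∑ i : Fin k, L.get i ^ p := by
    rw [Finset.mul_sum]
  rw [hL, hR, ENNReal.mul_rpow_of_nonneg _ _ (by linarith : (0:ℝ) ≤ p)] at key
  have key2 := mul_le_mul_right key ((k : ℝ≥0∞) ^ p)
  rw [← mul_assoc, ← mul_assoc, ← ENNReal.mul_rpow_of_nonneg _ _ (by linarith : (0:ℝ) ≤ p),
    ENNReal.mul_inv_cancel hk0 hktop, ENNReal.one_rpow, one_mul] at key2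
  have hkp : (k : ℝ≥0∞) ^ p * (k : ℝ≥0∞)⁻¹ = (k : ℝ≥0∞) ^ (p - 1) := by
    rw [show p - 1 = p + (-1) by ring, ENNReal.rpow_add _ _ hk0 hktop,
      ENNReal.rpow_neg_one]
  rw [hkp] at key2
  rw [hsum, hmapsum]
  exact key2

lemma pairSum_eq_zipWith (f : ℝ → ℝ → ℝ≥0∞) :
    ∀ l : List ℝ, pairSum f l = (List.zipWith f l l.tail).sum
  | [] => rfl
  | [a] => rfl
  | a :: b :: l => by
    rw [pairSum_cons_cons, pairSum_eq_zipWith f (b :: l)]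
    rfl

lemma interval_bound {E : Type*} [PseudoMetricSpace E] (p : ℝ) (x : ℝ → E)
    (hp : 1 ≤ p) (ω : ℝ → ℝ → ℝ≥0∞) {a b : ℝ} {l : List ℝ} {K : ℕ}
    (hc : l.Chain' (· < ·)) (hh : l.head? = some a) (hl : l.getLast? = some b)
    (hlen : l.length ≤ K + 1)
    (hpairs : l.Chain' (fun c d => edist (x c) (x d) ^ p ≤ ω c d)) :
    edist (x a) (x b) ^ p ≤ (K : ℝ≥0∞) ^ (p - 1) * pairSum ω l := by
  have hne : l ≠ [] := by rintro rfl; simp at hh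
  have hha : l.head hne = a := by
    rw [List.head?_eq_head hne] at hh
    exact Option.some_inj.mp hh
  have hlb : l.getLast hne = b := by
    rw [List.getLast?_eq_getLast_of_ne_nil hne] at hl
    exact Option.some_inj.mp hl
  have htri : edist (x a) (x b) ≤ pairSum (fun c d => edist (x c) (x d)) l := by
    rw [← hha, ← hlb]
    exact edist_head_getLast_le x l hne
  have h1 : edist (x a) (x b) ^ p ≤ (pairSum (fun c d => edist (x c) (x d)) l) ^ p :=
    ENNReal.rpow_le_rpow htri (by linarith)
  have h2 : (pairSum (fun c d => edist (x c) (x d)) l) ^ p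
      ≤ (K : ℝ≥0∞) ^ (p - 1) * pairSum (fun c d => edist (x c) (x d) ^ p) l := by
    rw [pairSum_eq_zipWith, pairSum_eq_zipWith]
    calc (List.zipWith (fun c d => edist (x c) (x d)) l l.tail).sum ^ p
        ≤ ((List.zipWith (fun c d => edist (x c) (x d)) l l.tail).length : ℝ≥0∞) ^ (p - 1) *
          ((List.zipWith (fun c d => edist (x c) (x d)) l l.tail).map (· ^ p)).sum :=
          list_rpow_sum_le hp _
      _ ≤ (K : ℝ≥0∞) ^ (p - 1) *
          ((List.zipWith (fun c d => edist (x c) (x d)) l l.tail).map (· ^ p)).sum := by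
          apply mul_le_mul_left
          apply ENNReal.rpow_le_rpow _ (by linarith : (0:ℝ) ≤ p - 1)
          rw [List.length_zipWith]
          have : min l.length l.tail.length ≤ K := by
            rw [List.length_tail]
            omega
          exact_mod_cast this
      _ = (K : ℝ≥0∞) ^ (p - 1) *
          (List.zipWith (fun c d => edist (x c) (x d) ^ p) l l.tail).sum := by
          rw [List.map_zipWith]
  have h3 : pairSum (fun c d => edist (x c) (x d) ^ p) l ≤ pairSum ω l :=
    pairSum_le_pairSum hpairs
  calc edist (x a) (x b) ^ p
      ≤ (K : ℝ≥0∞) ^ (p - 1) * pairSum (fun c d => edist (x c) (x d) ^ p) l := h1.trans h2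
    _ ≤ (K : ℝ≥0∞) ^ (p - 1) * pairSum ω l := mul_le_mul_right h3 _

end Holder


section SortedFinset

/-- The sorted list of a nonempty finite set of reals, with all the properties we need. -/
lemma sorted_finset_list (V : Finset ℝ) (hne : V.Nonempty) :
    ∃ l : List ℝ, l.Chain' (· < ·) ∧ l.head? = some (V.min' hne) ∧
      l.getLast? = some (V.max' hne) ∧ l.length = V.card ∧
      ∀ R : ℝ → ℝ → Prop,
        (∀ c d, c ∈ V → d ∈ V → c < d → (∀ e ∈ V, e ∉ Set.Ioo c d) → R c d) →
        l.Chain' R := by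
  set l := V.sort (· ≤ ·) with hldef
  have hlen : l.length = V.card := Finset.length_sort _
  have hlne : l ≠ [] := by
    intro h
    rw [h] at hlen
    simp only [List.length_nil] at hlen
    exact absurd (Finset.card_pos.2 hne) (by omega)
  have hsorted : List.Pairwise (· < ·) l := (V.sortedLT_sort).pairwise
  have hpw := hsorted
  rw [List.pairwise_iff_get] at hpw
  have hpos : 0 < l.length := List.length_pos_iff.2 hlne
  have hmem : ∀ {e : ℝ}, e ∈ l ↔ e ∈ V := fun {e} => Finset.mem_sort _
  refine ⟨l, List.chain'_iff_pairwise.2 hsorted, ?_, ?_, hlen, ?_⟩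
  · rw [List.head?_eq_head hlne, List.head_eq_getElem_zero hlne]
    exact congrArg some Finset.sorted_zero_eq_min'
  · rw [List.getLast?_eq_getLast_of_ne_nil hlne, List.getLast_eq_getElem]
    exact congrArg some Finset.sorted_last_eq_max'
  · intro R hR
    rw [List.chain'_iff_get]
    intro i hi
    have hilt : i < l.length := by omega
    have hi1lt : i + 1 < l.length := by omega
    set c := l.get ⟨i, hilt⟩ with hcdef
    set d := l.get ⟨i + 1, hi1lt⟩ with hddef
    have hcd : c < d := hpw _ _ (by simp [Fin.lt_def])
    refine hR c d (hmem.1 (l.get_mem _)) (hmem.1 (l.get_mem _)) hcd ?_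
    intro e heV hecd
    obtain ⟨j, hj⟩ := List.mem_iff_get.1 (hmem.2 heV)
    have h1 : i < (j : ℕ) := by
      by_contra hcon
      push_neg at hcon
      rcases Nat.lt_or_ge (j : ℕ) i with h | h
      · have := hpw j ⟨i, hilt⟩ (by simp [Fin.lt_def, h])
        rw [hj] at this
        exact absurd hecd.1 (not_lt.2 (le_of_lt this))
      · have hji : (j : ℕ) = i := by omega
        have : e = c := by rw [← hj, hcdef]; congr 1; exact Fin.ext hji
        rw [this] at hecd
        exact lt_irrefl _ hecd.1
    have h2 : (j : ℕ) < i + 1 := by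
      by_contra hcon
      push_neg at hcon
      rcases Nat.lt_or_ge (i + 1) (j : ℕ) with h | h
      · have := hpw ⟨i + 1, hi1lt⟩ j (by simp [Fin.lt_def, h])
        rw [hj] at this
        exact absurd hecd.2 (not_lt.2 (le_of_lt this))
      · have hji : (j : ℕ) = i + 1 := by omega
        have : e = d := by rw [← hj, hddef]; congr 1; exact Fin.ext hji
        rw [this] at hecd
        exact lt_irrefl _ hecd.2
    omega

end SortedFinset

end PvarAux






open PvarAux in
open scoped Classical in
theorem partition_sum_le_greedy_bound {E : Type*} [MetricSpace E] (p α T : ℝ)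
    (hp : 1 ≤ p) (hα : 0 < α) (hT : 0 ≤ T) (x : ℝ → E)
    (hx : ContinuousOn x (Set.Icc 0 T)) (hfin : pVar p x 0 T < ∞)
    (n : ℕ) (u : Fin (n + 1) → ℝ) (hu : StrictMono u) (hu0 : u 0 = 0)
    (huT : u (Fin.last n) = T) :
    ∑ i : Fin n, edist (x (u i.castSucc)) (x (u i.succ)) ^ p ≤
      (if BddAbove {m : ℕ |
            greedyPoints (fun s t => pVar p x s t) (ENNReal.ofReal α) T m < T} then
        ((sSup {m : ℕ |
            greedyPoints (fun s t => pVar p x s t) (ENNReal.ofReal α) T m < T} : ℕ) + 1 :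
              ℝ≥0∞) ^ (p - 1) *
          accumLocalVar (fun s t => pVar p x s t) (ENNReal.ofReal α) T
      else ∞) := by
  by_cases hBdd : BddAbove {m : ℕ | greedyPoints (fun s t => pVar p x s t) (ENNReal.ofReal α) T m < T}
  swap
  · rw [if_neg hBdd]; exact le_top
  rw [if_pos hBdd]
  rcases Nat.eq_zero_or_pos n with rfl | hn
  · exact le_trans (le_of_eq (by simp)) zero_le
  have hT0 : 0 < T := by
    rw [← hu0, ← huT]
    exact hu (show (0 : Fin (n + 1)) < Fin.last n by
      rw [Fin.lt_def]; simpa using hn)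
  have hu0le : ∀ i : Fin (n + 1), 0 ≤ u i := fun i => hu0 ▸ hu.monotone (Fin.zero_le i)
  have huleT : ∀ i : Fin (n + 1), u i ≤ T := fun i => huT ▸ hu.monotone (Fin.le_last i)
  have hab : ∀ i : Fin n, u i.castSucc < u i.succ := fun i => hu Fin.castSucc_lt_succ
  -- the per-interval lists
  have hVi : ∀ i : Fin n, ∃ l : List ℝ,
      l.Chain' (· < ·) ∧ l.head? = some (u i.castSucc) ∧ l.getLast? = some (u i.succ) ∧
      l.Chain' (fun c d => pVar p x c d ≤ (ENNReal.ofReal α) ∧ edist (x c) (x d) ^ p ≤ pVar p x c d) ∧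
      l.length ≤ ((sSup {m : ℕ | greedyPoints (fun s t => pVar p x s t) (ENNReal.ofReal α) T m < T}) + 1) + 1 := by
    intro i
    set a := u i.castSucc with ha
    set b := u i.succ with hb
    have hab' : a < b := hab i
    have ha0 : 0 ≤ a := hu0le _
    have hbT : b ≤ T := huleT _
    set V : Finset ℝ :=
      insert a (insert b (((Finset.range ((sSup {m : ℕ | greedyPoints (fun s t => pVar p x s t) (ENNReal.ofReal α) T m < T}) + 2)).image (greedyPoints (fun s t => pVar p x s t) (ENNReal.ofReal α) T)).filter
        (· ∈ Set.Ioo a b))) with hV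
    have haV : a ∈ V := Finset.mem_insert_self _ _
    have hbV : b ∈ V := Finset.mem_insert_of_mem (Finset.mem_insert_self _ _)
    have hVbounds : ∀ e ∈ V, a ≤ e ∧ e ≤ b := by
      intro e he
      rw [hV] at he
      rcases Finset.mem_insert.1 he with rfl | he
      · exact ⟨le_rfl, le_of_lt hab'⟩
      rcases Finset.mem_insert.1 he with rfl | he
      · exact ⟨le_of_lt hab', le_rfl⟩
      · have := (Finset.mem_filter.1 he).2
        exact ⟨le_of_lt this.1, le_of_lt this.2⟩
    have hne : V.Nonempty := ⟨a, haV⟩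
    have hmin : V.min' hne = a :=
      le_antisymm (V.min'_le a haV) (Finset.le_min' _ _ _ fun e he => (hVbounds e he).1)
    have hmax : V.max' hne = b :=
      le_antisymm (Finset.max'_le _ _ _ fun e he => (hVbounds e he).2) (V.le_max' b hbV)
    have hcard : V.card ≤ ((sSup {m : ℕ | greedyPoints (fun s t => pVar p x s t) (ENNReal.ofReal α) T m < T}) + 1) + 1 := by
      have hfil : (((Finset.range ((sSup {m : ℕ | greedyPoints (fun s t => pVar p x s t) (ENNReal.ofReal α) T m < T}) + 2)).image (greedyPoints (fun s t => pVar p x s t) (ENNReal.ofReal α) T)).filter (· ∈ Set.Ioo a b))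
          ⊆ (Finset.Ioo 0 ((sSup {m : ℕ | greedyPoints (fun s t => pVar p x s t) (ENNReal.ofReal α) T m < T}) + 1)).image (greedyPoints (fun s t => pVar p x s t) (ENNReal.ofReal α) T) := by
        intro e he
        rw [Finset.mem_filter] at he
        obtain ⟨heS, heI⟩ := he
        rw [Finset.mem_image] at heS
        obtain ⟨m, hm, rfl⟩ := heS
        rw [Finset.mem_range] at hm
        refine Finset.mem_image.2 ⟨m, ?_, rfl⟩
        rw [Finset.mem_Ioo]
        constructor
        · rcases Nat.eq_zero_or_pos m with rfl | h
          · exfalso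
            have h0 : greedyPoints (fun s t => pVar p x s t) (ENNReal.ofReal α) T 0 = 0 := greedy_zero _ _
            rw [h0] at heI
            exact absurd heI.1 (not_lt.2 ha0)
          · exact h
        · rcases Nat.lt_or_ge m ((sSup {m : ℕ | greedyPoints (fun s t => pVar p x s t) (ENNReal.ofReal α) T m < T}) + 1) with h | h
          · exact h
          · exfalso
            have hm1 : m = (sSup {m : ℕ | greedyPoints (fun s t => pVar p x s t) (ENNReal.ofReal α) T m < T}) + 1 := by omega
            have hmT : greedyPoints (fun s t => pVar p x s t) (ENNReal.ofReal α) T m = T := by rw [hm1]; exact greedy_top _ _ hT0 hBdd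
            rw [hmT] at heI
            exact absurd heI.2 (not_lt.2 hbT)
      have h1 : ((((Finset.range ((sSup {m : ℕ | greedyPoints (fun s t => pVar p x s t) (ENNReal.ofReal α) T m < T}) + 2)).image (greedyPoints (fun s t => pVar p x s t) (ENNReal.ofReal α) T)).filter
          (· ∈ Set.Ioo a b))).card ≤ (sSup {m : ℕ | greedyPoints (fun s t => pVar p x s t) (ENNReal.ofReal α) T m < T}) := by
        calc ((((Finset.range ((sSup {m : ℕ | greedyPoints (fun s t => pVar p x s t) (ENNReal.ofReal α) T m < T}) + 2)).image (greedyPoints (fun s t => pVar p x s t) (ENNReal.ofReal α) T)).filter (· ∈ Set.Ioo a b))).card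
            ≤ ((Finset.Ioo 0 ((sSup {m : ℕ | greedyPoints (fun s t => pVar p x s t) (ENNReal.ofReal α) T m < T}) + 1)).image (greedyPoints (fun s t => pVar p x s t) (ENNReal.ofReal α) T)).card := Finset.card_le_card hfil
          _ ≤ (Finset.Ioo 0 ((sSup {m : ℕ | greedyPoints (fun s t => pVar p x s t) (ENNReal.ofReal α) T m < T}) + 1)).card := Finset.card_image_le
          _ = (sSup {m : ℕ | greedyPoints (fun s t => pVar p x s t) (ENNReal.ofReal α) T m < T}) := by simp [Nat.card_Ioo]
      calc V.card
          ≤ (insert b (((Finset.range ((sSup {m : ℕ | greedyPoints (fun s t => pVar p x s t) (ENNReal.ofReal α) T m < T}) + 2)).image (greedyPoints (fun s t => pVar p x s t) (ENNReal.ofReal α) T)).filter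
              (· ∈ Set.Ioo a b))).card + 1 := Finset.card_insert_le _ _
        _ ≤ (((((Finset.range ((sSup {m : ℕ | greedyPoints (fun s t => pVar p x s t) (ENNReal.ofReal α) T m < T}) + 2)).image (greedyPoints (fun s t => pVar p x s t) (ENNReal.ofReal α) T)).filter
              (· ∈ Set.Ioo a b))).card + 1) + 1 :=
            Nat.add_le_add_right (Finset.card_insert_le _ _) 1
        _ ≤ ((sSup {m : ℕ | greedyPoints (fun s t => pVar p x s t) (ENNReal.ofReal α) T m < T}) + 1) + 1 := by omega
    obtain ⟨l, hlc, hlh, hll, hllen, hlR⟩ := sorted_finset_list V hne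
    refine ⟨l, hlc, by rw [hlh, hmin], by rw [hll, hmax], ?_,
      le_trans (le_of_eq hllen) hcard⟩
    apply hlR
    intro c d hcV hdV hcd hgap
    have hac : a ≤ c := (hVbounds c hcV).1
    have hdb : d ≤ b := (hVbounds d hdV).2
    have hcover : pVar p x c d ≤ (ENNReal.ofReal α) := by
      refine greedy_cover p x (ENNReal.ofReal α) hx hT0 hBdd (le_trans ha0 hac) hcd
        (le_trans hdb hbT) ?_
      intro m hm hmem
      have hmS : greedyPoints (fun s t => pVar p x s t) (ENNReal.ofReal α) T m ∈ (Finset.range ((sSup {m : ℕ | greedyPoints (fun s t => pVar p x s t) (ENNReal.ofReal α) T m < T}) + 2)).image (greedyPoints (fun s t => pVar p x s t) (ENNReal.ofReal α) T) :=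
        Finset.mem_image.2 ⟨m, Finset.mem_range.2 (by omega), rfl⟩
      have hmIoo : greedyPoints (fun s t => pVar p x s t) (ENNReal.ofReal α) T m ∈ Set.Ioo a b :=
        ⟨lt_of_le_of_lt hac hmem.1, lt_of_lt_of_le hmem.2 hdb⟩
      have hmV : greedyPoints (fun s t => pVar p x s t) (ENNReal.ofReal α) T m ∈ V := by
        rw [hV]
        exact Finset.mem_insert_of_mem (Finset.mem_insert_of_mem
          (Finset.mem_filter.2 ⟨hmS, hmIoo⟩))
      exact hgap _ hmV hmem
    exact ⟨hcover, edist_le_pVar p x hcd⟩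
  choose l hlc hlh hll hlch hllen using hVi
  -- concatenate the per-interval lists along the partition
  have hCUM : ∀ j : Fin (n + 1), ∃ L : List ℝ, L.Chain' (· < ·) ∧
      L.head? = some 0 ∧ L.getLast? = some (u j) ∧
      L.Chain' (fun c d => pVar p x c d ≤ (ENNReal.ofReal α)) ∧
      ∑ i ∈ Finset.univ.filter (fun i : Fin n => i.castSucc < j),
          pairSum (fun s t => pVar p x s t) (l i) ≤ pairSum (fun s t => pVar p x s t) L := by
    intro j
    induction j using Fin.induction with
    | zero =>
      refine ⟨[0], List.chain'_singleton _, rfl, by rw [hu0]; rfl,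
        List.chain'_singleton _, ?_⟩
      have hempty : Finset.univ.filter (fun i : Fin n => i.castSucc < 0) = ∅ := by
        ext i
        simp [Fin.lt_def]
      rw [hempty, Finset.sum_empty]
      exact zero_le
    | succ i ihP =>
      obtain ⟨L, hLc, hLh, hLl, hLadm, hLsum⟩ := ihP
      obtain ⟨tl, htl⟩ : ∃ tl, l i = u i.castSucc :: tl := by
        have hh := hlh i
        cases hlim : l i with
        | nil => rw [hlim] at hh; simp at hh
        | cons c tl =>
          rw [hlim] at hh
          simp only [List.head?_cons, Option.some_inj] at hh
          exact ⟨tl, by rw [hh]⟩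
      have htlne : tl ≠ [] := by
        intro h
        rw [h] at htl
        have h2 := hll i
        rw [htl] at h2
        simp only [List.getLast?_singleton, Option.some_inj] at h2
        exact absurd h2 (ne_of_lt (hab i))
      have hLne : L ≠ [] := by intro h; rw [h] at hLh; simp at hLh
      have hLlast : L.getLast hLne = u i.castSucc := by
        rw [List.getLast?_eq_getLast_of_ne_nil hLne] at hLl
        exact Option.some_inj.mp hLl
      have hdecomp : L.dropLast ++ [u i.castSucc] = L := by
        rw [← hLlast]
        exact List.dropLast_append_getLast hLne
      have happ : ∀ R : ℝ → ℝ → Prop, L.Chain' R → (l i).Chain' R →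
          (L ++ tl).Chain' R := by
        intro R hR1 hR2
        rw [htl] at hR2
        refine List.chain'_append.2 ⟨hR1, (List.chain'_cons'.1 hR2).2, ?_⟩
        intro c hc d hd
        rw [hLl] at hc
        simp only [Option.mem_def, Option.some_inj] at hc
        exact hc ▸ (List.chain'_cons'.1 hR2).1 d hd
      refine ⟨L ++ tl, happ _ hLc (hlc i), ?_, ?_, happ _ hLadm
        ((hlch i).imp fun a b h => h.1), ?_⟩
      · cases L with
        | nil => exact absurd rfl hLne
        | cons z Lt =>
          simp only [List.head?_cons, Option.some_inj] at hLh
          rw [List.cons_append, List.head?_cons, hLh]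
      · rw [List.getLast?_append_of_ne_nil _ htlne]
        have h2 := hll i
        rw [htl] at h2
        cases tl with
        | nil => exact absurd rfl htlne
        | cons c tl' =>
          rw [List.getLast?_cons_cons] at h2
          exact h2
      · have hfil : Finset.univ.filter (fun j : Fin n => j.castSucc < i.succ)
            = insert i (Finset.univ.filter (fun j : Fin n => j.castSucc < i.castSucc)) := by
          ext j
          simp only [Finset.mem_filter, Finset.mem_insert, Finset.mem_univ, true_and,
            Fin.lt_def, Fin.coe_castSucc, Fin.val_succ, Fin.ext_iff]
          omega
        have hni : i ∉ Finset.univ.filter (fun j : Fin n => j.castSucc < i.castSucc) := by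
          intro hmem
          exact absurd (Finset.mem_filter.1 hmem).2 (lt_irrefl _)
        rw [hfil, Finset.sum_insert hni]
        have hps : pairSum (fun s t => pVar p x s t) (L ++ tl) = pairSum (fun s t => pVar p x s t) L + pairSum (fun s t => pVar p x s t) (l i) := by
          have h2 : L ++ tl = L.dropLast ++ (u i.castSucc :: tl) := by
            rw [← hdecomp]; simp
          rw [h2, pairSum_concat, hdecomp, ← htl]
        rw [hps, add_comm (pairSum (fun s t => pVar p x s t) L)]
        exact add_le_add le_rfl hLsum
  obtain ⟨L, hLc, hLh, hLl, hLadm, hLsum⟩ := hCUM (Fin.last n)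
  rw [huT] at hLl
  have hfilall : Finset.univ.filter (fun j : Fin n => j.castSucc < Fin.last n)
      = Finset.univ := by
    ext j
    simpa [Fin.lt_def] using j.isLt
  rw [hfilall] at hLsum
  have hper : ∀ i : Fin n, edist (x (u i.castSucc)) (x (u i.succ)) ^ p
      ≤ ((((sSup {m : ℕ | greedyPoints (fun s t => pVar p x s t) (ENNReal.ofReal α) T m < T}) + 1 : ℕ)) : ℝ≥0∞) ^ (p - 1) * pairSum (fun s t => pVar p x s t) (l i) := fun i =>
    interval_bound p x hp (fun s t => pVar p x s t) (hlc i) (hlh i) (hll i) (hllen i)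
      ((hlch i).imp fun a b h => h.2)
  calc ∑ i : Fin n, edist (x (u i.castSucc)) (x (u i.succ)) ^ p
      ≤ ∑ i : Fin n, ((((sSup {m : ℕ | greedyPoints (fun s t => pVar p x s t) (ENNReal.ofReal α) T m < T}) + 1 : ℕ)) : ℝ≥0∞) ^ (p - 1) * pairSum (fun s t => pVar p x s t) (l i) :=
        Finset.sum_le_sum fun i _ => hper i
    _ = ((((sSup {m : ℕ | greedyPoints (fun s t => pVar p x s t) (ENNReal.ofReal α) T m < T}) + 1 : ℕ)) : ℝ≥0∞) ^ (p - 1) * ∑ i : Fin n, pairSum (fun s t => pVar p x s t) (l i) := by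
        rw [Finset.mul_sum]
    _ ≤ ((((sSup {m : ℕ | greedyPoints (fun s t => pVar p x s t) (ENNReal.ofReal α) T m < T}) + 1 : ℕ)) : ℝ≥0∞) ^ (p - 1) * pairSum (fun s t => pVar p x s t) L := mul_le_mul_right hLsum _
    _ ≤ ((((sSup {m : ℕ | greedyPoints (fun s t => pVar p x s t) (ENNReal.ofReal α) T m < T}) + 1 : ℕ)) : ℝ≥0∞) ^ (p - 1) * accumLocalVar (fun s t => pVar p x s t) (ENNReal.ofReal α) T :=
        mul_le_mul_right (le_accum (fun s t => pVar p x s t) (ENNReal.ofReal α) T hLc hLh hLl hLadm) _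
    _ = (((sSup {m : ℕ | greedyPoints (fun s t => pVar p x s t) (ENNReal.ofReal α) T m < T} : ℕ) : ℝ≥0∞) + 1) ^ (p - 1) * accumLocalVar (fun s t => pVar p x s t) (ENNReal.ofReal α) T := by
        rw [Nat.cast_add, Nat.cast_one]
end

section
/- Let ω be a control on [0,T] and α > 0. If N := N_{α,[0,T]}(ω) is finite, then N ≤ α^{−1} · M_{α,[0,T]}(ω). -/
open scoped ENNReal
open Topology Filter

theorem greedy_count_le_accumLocalVar (ω : ℝ → ℝ → ℝ≥0∞) (α T : ℝ)
    (hα : 0 < α) (hT : 0 ≤ T)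
    (hcont : ContinuousOn (fun q : ℝ × ℝ => ω q.1 q.2)
      {q : ℝ × ℝ | 0 ≤ q.1 ∧ q.1 ≤ q.2 ∧ q.2 ≤ T})
    (hdiag : ∀ t, 0 ≤ t → t ≤ T → ω t t = 0)
    (hsuper : ∀ s t u, 0 ≤ s → s ≤ t → t ≤ u → u ≤ T → ω s t + ω t u ≤ ω s u)
    (hbdd : BddAbove {n : ℕ | greedyPoints ω (ENNReal.ofReal α) T n < T}) :
    ((sSup {n : ℕ | greedyPoints ω (ENNReal.ofReal α) T n < T} : ℕ) : ℝ≥0∞) ≤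
      (ENNReal.ofReal α)⁻¹ * accumLocalVar ω (ENNReal.ofReal α) T := by
  set α' := ENNReal.ofReal α with hα'def
  have hα0 : α' ≠ 0 := by
    simp only [hα'def, ne_eq, ENNReal.ofReal_eq_zero, not_le]; exact hα
  have hαtop : α' ≠ ⊤ := ENNReal.ofReal_ne_top
  have hαpos : (0 : ℝ≥0∞) < α' := pos_iff_ne_zero.mpr hα0
  set σ : ℕ → ℝ := greedyPoints ω α' T with hσ
  have hdef_pos : ∀ n, (∃ t ∈ Set.Ioc (σ n) T, α' ≤ ω (σ n) t) →
      σ (n + 1) = sInf {t | t ∈ Set.Ioc (σ n) T ∧ α' ≤ ω (σ n) t} := by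
    intro n h
    rw [hσ, greedyPoints, if_pos h]
  have hdef_neg : ∀ n, ¬(∃ t ∈ Set.Ioc (σ n) T, α' ≤ ω (σ n) t) → σ (n + 1) = T := by
    intro n h
    rw [hσ, greedyPoints, if_neg h]
  have hσ0 : σ 0 = 0 := rfl
  -- bounds
  have hb : ∀ n, 0 ≤ σ n ∧ σ n ≤ T := by
    intro n
    induction n with
    | zero => exact ⟨le_refl 0, hT⟩
    | succ n ih =>
      by_cases h : ∃ t ∈ Set.Ioc (σ n) T, α' ≤ ω (σ n) t
      · rw [hdef_pos n h]
        obtain ⟨t, ht, hωt⟩ := h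
        have hne : {t | t ∈ Set.Ioc (σ n) T ∧ α' ≤ ω (σ n) t}.Nonempty := ⟨t, ht, hωt⟩
        have hlb : σ n ∈ lowerBounds {t | t ∈ Set.Ioc (σ n) T ∧ α' ≤ ω (σ n) t} :=
          fun x hx => hx.1.1.le
        constructor
        · exact le_csInf hne fun x hx => ih.1.trans hx.1.1.le
        · exact (csInf_le ⟨σ n, hlb⟩ ⟨ht, hωt⟩).trans ht.2
      · rw [hdef_neg n h]; exact ⟨hT, le_refl T⟩
  -- monotonicity
  have hmonoσ : Monotone σ := by
    apply monotone_nat_of_le_succ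
    intro n
    by_cases h : ∃ t ∈ Set.Ioc (σ n) T, α' ≤ ω (σ n) t
    · rw [hdef_pos n h]
      obtain ⟨t, ht, hωt⟩ := h
      exact le_csInf ⟨t, ht, hωt⟩ fun x hx => hx.1.1.le
    · rw [hdef_neg n h]; exact (hb n).2
  -- continuity of the section t ↦ ω s t
  have hsec : ∀ s, 0 ≤ s → ContinuousOn (fun t => ω s t) (Set.Icc s T) := by
    intro s hs
    have hg : Continuous fun t : ℝ => ((s, t) : ℝ × ℝ) := continuous_const.prodMk continuous_id
    have hmaps : Set.MapsTo (fun t : ℝ => ((s, t) : ℝ × ℝ)) (Set.Icc s T)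
        {q : ℝ × ℝ | 0 ≤ q.1 ∧ q.1 ≤ q.2 ∧ q.2 ≤ T} := fun t ht => ⟨hs, ht.1, ht.2⟩
    have key : ContinuousOn ((fun q : ℝ × ℝ => ω q.1 q.2) ∘ fun t : ℝ => (s, t))
        (Set.Icc s T) := ContinuousOn.comp hcont hg.continuousOn hmaps
    exact key
  -- strict step
  have hstep : ∀ n, σ n < T → σ n < σ (n + 1) := by
    intro n hnT
    have h0 : 0 ≤ σ n := (hb n).1
    have hmem : ((σ n, σ n) : ℝ × ℝ) ∈ {q : ℝ × ℝ | 0 ≤ q.1 ∧ q.1 ≤ q.2 ∧ q.2 ≤ T} :=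
      ⟨h0, le_refl _, hnT.le⟩
    have hzero : ω (σ n) (σ n) = 0 := hdiag _ h0 hnT.le
    have hopen : {x : ℝ≥0∞ | x < α'} ∈ 𝓝 ((fun q : ℝ × ℝ => ω q.1 q.2) (σ n, σ n)) := by
      refine IsOpen.mem_nhds isOpen_Iio ?_
      simp only [Set.mem_Iio, hzero]
      exact hαpos
    have hc := (hcont _ hmem) hopen
    obtain ⟨δ, hδ, hball⟩ := Metric.mem_nhdsWithin_iff.mp hc
    have hclaim : ∀ t, σ n ≤ t → t ≤ T → t < σ n + δ → ω (σ n) t < α' := by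
      intro t h1 h2 h3
      have hq : ((σ n, t) : ℝ × ℝ) ∈ Metric.ball ((σ n, σ n) : ℝ × ℝ) δ ∩
          {q : ℝ × ℝ | 0 ≤ q.1 ∧ q.1 ≤ q.2 ∧ q.2 ≤ T} := by
        constructor
        · rw [Metric.mem_ball, Prod.dist_eq]
          simp only [dist_self, Real.dist_eq]
          rw [abs_of_nonneg (by linarith)]
          simp only [max_lt_iff]
          exact ⟨hδ, by linarith⟩
        · exact ⟨h0, h1, h2⟩
      exact hball hq
    by_cases h : ∃ t ∈ Set.Ioc (σ n) T, α' ≤ ω (σ n) t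
    · rw [hdef_pos n h]
      obtain ⟨t, ht, hωt⟩ := h
      have hlb : min (σ n + δ) T ∈ lowerBounds {t | t ∈ Set.Ioc (σ n) T ∧ α' ≤ ω (σ n) t} := by
        intro x hx
        by_contra hcon
        push_neg at hcon
        have hx1 : x < σ n + δ := lt_of_lt_of_le hcon (min_le_left _ _)
        have := hclaim x hx.1.1.le hx.1.2 hx1
        exact absurd hx.2 (not_le.mpr this)
      calc σ n < min (σ n + δ) T := lt_min (by linarith) hnT
        _ ≤ sInf {t | t ∈ Set.Ioc (σ n) T ∧ α' ≤ ω (σ n) t} := le_csInf ⟨t, ht, hωt⟩ hlb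
    · rw [hdef_neg n h]; exact hnT
  -- lower bound on pieces
  have hge : ∀ n, σ n < T → σ (n + 1) < T → α' ≤ ω (σ n) (σ (n + 1)) := by
    intro n hnT hn1T
    by_cases h : ∃ t ∈ Set.Ioc (σ n) T, α' ≤ ω (σ n) t
    · have heq := hdef_pos n h
      obtain ⟨t, ht, hωt⟩ := h
      set A := {t | t ∈ Set.Ioc (σ n) T ∧ α' ≤ ω (σ n) t} with hA
      have hne : A.Nonempty := ⟨t, ht, hωt⟩
      have hlbA : BddBelow A := ⟨σ n, fun x hx => hx.1.1.le⟩
      have hcl : sInf A ∈ closure A := csInf_mem_closure hne hlbA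
      have hB : IsClosed (Set.Icc (σ n) T ∩ (fun t => ω (σ n) t) ⁻¹' Set.Ici α') :=
        (hsec (σ n) (hb n).1).preimage_isClosed_of_isClosed isClosed_Icc isClosed_Ici
      have hsub : A ⊆ Set.Icc (σ n) T ∩ (fun t => ω (σ n) t) ⁻¹' Set.Ici α' :=
        fun x hx => ⟨⟨hx.1.1.le, hx.1.2⟩, hx.2⟩
      have := hB.closure_subset ((closure_mono hsub) hcl)
      rw [heq]
      exact this.2
    · exact absurd (hdef_neg n h) (ne_of_lt hn1T)
  -- upper bound on pieces
  have hle : ∀ n, σ n < T → ω (σ n) (σ (n + 1)) ≤ α' := by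
    intro n hnT
    by_cases h : ∃ t ∈ Set.Ioc (σ n) T, α' ≤ ω (σ n) t
    · have heq := hdef_pos n h
      have hlt : σ n < σ (n + 1) := hstep n hnT
      have hub : σ (n + 1) ≤ T := (hb (n + 1)).2
      have hless : ∀ x ∈ Set.Ioo (σ n) (σ (n + 1)), ω (σ n) x ≤ α' := by
        intro x hx
        by_contra hcon
        push_neg at hcon
        have hxA : x ∈ {t | t ∈ Set.Ioc (σ n) T ∧ α' ≤ ω (σ n) t} :=
          ⟨⟨hx.1, hx.2.le.trans hub⟩, hcon.le⟩
        have : sInf {t | t ∈ Set.Ioc (σ n) T ∧ α' ≤ ω (σ n) t} ≤ x :=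
          csInf_le ⟨σ n, fun y hy => hy.1.1.le⟩ hxA
        rw [← heq] at this
        exact absurd hx.2 (not_lt.mpr this)
      -- continuity from the left
      have hcw : ContinuousWithinAt (fun t => ω (σ n) t) (Set.Icc (σ n) T) (σ (n + 1)) :=
        hsec (σ n) (hb n).1 _ ⟨hlt.le, hub⟩
      have hmonoIoo : Set.Ioo (σ n) (σ (n + 1)) ⊆ Set.Icc (σ n) T :=
        fun x hx => ⟨hx.1.le, hx.2.le.trans hub⟩
      have htend : Filter.Tendsto (fun t => ω (σ n) t) (𝓝[Set.Ioo (σ n) (σ (n + 1))] (σ (n + 1)))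
          (𝓝 (ω (σ n) (σ (n + 1)))) := hcw.mono hmonoIoo
      have hnebot : (𝓝[Set.Ioo (σ n) (σ (n + 1))] (σ (n + 1))).NeBot := by
        rw [← mem_closure_iff_nhdsWithin_neBot, closure_Ioo (ne_of_lt hlt)]
        exact ⟨hlt.le, le_refl _⟩
      exact le_of_tendsto htend
        (Filter.eventually_iff_exists_mem.mpr
          ⟨Set.Ioo (σ n) (σ (n + 1)), self_mem_nhdsWithin, hless⟩)
    · have heq := hdef_neg n h
      rw [heq]
      push_neg at h
      exact (h T ⟨hnT, le_refl T⟩).le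
  -- main argument
  by_cases hTpos : 0 < T
  · have h0S : 0 ∈ {n : ℕ | σ n < T} := by simpa [hσ0] using hTpos
    set S := {n : ℕ | σ n < T} with hS
    set N := sSup S with hN
    have hNmem : N ∈ S := Nat.sSup_mem ⟨0, h0S⟩ hbdd
    have hNT : σ N < T := hNmem
    have hltT : ∀ i, i ≤ N → σ i < T := fun i hi => lt_of_le_of_lt (hmonoσ hi) hNT
    have hN1 : σ (N + 1) = T := by
      refine le_antisymm (hb (N + 1)).2 ?_
      by_contra hcon
      push_neg at hcon
      have : N + 1 ∈ S := hcon
      exact absurd (le_csSup hbdd this) (by omega)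
    have hchain : ∀ i j, i < j → j ≤ N → σ i < σ j := by
      intro i j hij hjN
      have h1 : σ i < σ (i + 1) := hstep i (hltT i (by omega))
      exact lt_of_lt_of_le h1 (hmonoσ (by omega))
    -- the partition
    set u : Fin (N + 2) → ℝ := fun i => if (i : ℕ) ≤ N then σ i else T with hu
    have hu0 : u 0 = 0 := by simp [hu, hσ0]
    have hulast : u (Fin.last (N + 1)) = T := by simp [hu]
    have huval : ∀ i : Fin (N + 2), (i : ℕ) ≤ N → u i = σ i := by
      intro i hi; simp [hu, hi]
    have humono : StrictMono u := by
      intro i j hij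
      rw [Fin.lt_def] at hij
      by_cases hj : (j : ℕ) ≤ N
      · rw [huval i (by omega), huval j hj]
        exact hchain i j hij hj
      · have hjv : (j : ℕ) = N + 1 := by omega
        have hiN : (i : ℕ) ≤ N := by omega
        have hjT : u j = T := by simp [hu, hj]
        rw [huval i hiN, hjT]
        exact hltT i hiN
    have hpieces : ∀ i : Fin (N + 1), ω (u i.castSucc) (u i.succ) ≤ α' := by
      intro i
      have hiv : (i.castSucc : ℕ) = (i : ℕ) := rfl
      have hsv : (i.succ : ℕ) = (i : ℕ) + 1 := rfl
      have hiN : (i : ℕ) ≤ N := by omega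
      rw [huval i.castSucc (by omega)]
      by_cases hi : (i : ℕ) < N
      · rw [huval i.succ (by simp [hsv]; omega)]
        simp only [hiv, hsv]
        exact hle i (hltT i hiN)
      · have : (i : ℕ) = N := by omega
        have hsucc : u i.succ = T := by
          simp only [hu, hsv, this]
          rw [if_neg (by omega)]
        rw [hsucc, hiv, this, ← hN1]
        exact hle N hNT
    have hsum : (N : ℝ≥0∞) * α' ≤ ∑ i : Fin (N + 1), ω (u i.castSucc) (u i.succ) := by
      rw [Fin.sum_univ_castSucc]
      have hterm : ∀ i : Fin N, α' ≤ ω (u (i.castSucc.castSucc)) (u i.castSucc.succ) := by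
        intro i
        have h1 : ((i.castSucc.castSucc : Fin (N + 2)) : ℕ) = (i : ℕ) := rfl
        have h2 : ((i.castSucc.succ : Fin (N + 2)) : ℕ) = (i : ℕ) + 1 := rfl
        rw [huval _ (by rw [h1]; omega), huval _ (by rw [h2]; omega), h1, h2]
        exact hge i (hltT i (by omega)) (hltT (i + 1) (by omega))
      calc (N : ℝ≥0∞) * α' = ∑ _i : Fin N, α' := by
            simp [Finset.sum_const, nsmul_eq_mul]
        _ ≤ ∑ i : Fin N, ω (u (i.castSucc.castSucc)) (u i.castSucc.succ) :=
            Finset.sum_le_sum fun i _ => hterm i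
        _ ≤ _ := le_add_of_nonneg_right zero_le
    have hMle : ∑ i : Fin (N + 1), ω (u i.castSucc) (u i.succ) ≤ accumLocalVar ω α' T := by
      apply le_iSup_of_le (N + 1)
      apply le_iSup_of_le u
      exact le_iSup_of_le humono (le_iSup_of_le hu0 (le_iSup_of_le hulast
        (le_iSup_of_le hpieces le_rfl)))
    have hfinal : (N : ℝ≥0∞) * α' ≤ accumLocalVar ω α' T := hsum.trans hMle
    calc ((N : ℕ) : ℝ≥0∞) = α'⁻¹ * ((N : ℝ≥0∞) * α') := by
          rw [mul_comm (N : ℝ≥0∞) α', ← mul_assoc, ENNReal.inv_mul_cancel hα0 hαtop, one_mul]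
      _ ≤ α'⁻¹ * accumLocalVar ω α' T := by gcongr
  · have hSempty : {n : ℕ | σ n < T} = ∅ := by
      ext n
      simp only [Set.mem_setOf_eq, Set.mem_empty_iff_false, iff_false, not_lt]
      exact le_trans (not_lt.mp hTpos) (hb n).1
    rw [hSempty, csSup_empty]
    simp
end
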